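/- arXiv:2511.08961 — 7 statements merged into one kernel-verified Lean document; each statement's English description precedes it below -/
import Mathlib

section
/- Let g : [s₀,∞) → ℝ be C², positive, with g, g' > 0 for large s, and suppose the limit 1/q := lim_{s→∞} g(s)g''(s)/(g'(s))² exists with ∫_s^∞ du/g(u) < ∞ for large s. Then q ≥ 1. -/
open Real Filter Set MeasureTheory

/-- Under (G1) (with C² regularity, positivity, eventual positivity of g',
integrability of 1/g at infinity, and existence of the limit
1/q = lim g·g''/(g')²), one has q ≥ 1. -/
theorem stmt_0 (g : ℝ → ℝ) (s₀ q : ℝ) (hq : q ≠ 0)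
    (hC2 : ContDiffOn ℝ 2 g (Ici s₀))
    (hgpos : ∀ s ∈ Ici s₀, 0 < g s)
    (hg' : ∀ᶠ s in atTop, 0 < deriv g s)
    (hint : ∀ᶠ s in atTop, IntegrableOn (fun u => 1 / g u) (Ici s))
    (hlim : Tendsto (fun s => g s * deriv (deriv g) s / (deriv g s) ^ 2)
      atTop (nhds (1 / q))) :
    1 ≤ q := by
  have hopen : IsOpen (Ioi s₀) := isOpen_Ioi
  have hC2' : ContDiffOn ℝ 2 g (Ioi s₀) := hC2.mono Ioi_subset_Ici_self
  have hdiffg : DifferentiableOn ℝ g (Ioi s₀) := hC2'.differentiableOn (by norm_num)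
  have hC1d : ContDiffOn ℝ 1 (deriv g) (Ioi s₀) :=
    hC2'.deriv_of_isOpen hopen (by norm_num)
  have hdiffd : DifferentiableOn ℝ (deriv g) (Ioi s₀) := hC1d.differentiableOn (by norm_num)
  have hcontg : ContinuousOn g (Ioi s₀) := hdiffg.continuousOn
  have hcontd : ContinuousOn (deriv g) (Ioi s₀) := hdiffd.continuousOn
  have hdAt : ∀ s ∈ Ioi s₀, DifferentiableAt ℝ g s := fun s hs =>
    hdiffg.differentiableAt (hopen.mem_nhds hs)
  have hddAt : ∀ s ∈ Ioi s₀, DifferentiableAt ℝ (deriv g) s := fun s hs =>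
    hdiffd.differentiableAt (hopen.mem_nhds hs)
  by_contra hcon
  push_neg at hcon
  rcases lt_or_gt_of_ne hq with hqneg | hqpos
  · -- Case q < 0 : 1/q < 0, so g'' < 0 eventually, g grows at most linearly,
    -- contradicting integrability of 1/g.
    have hinv : 1 / q < 0 := div_neg_of_pos_of_neg one_pos hqneg
    have hH : ∀ᶠ s in atTop, g s * deriv (deriv g) s / (deriv g s) ^ 2 < 0 :=
      hlim.eventually (eventually_lt_nhds hinv)
    obtain ⟨a, ha⟩ := eventually_atTop.mp
      ((hg'.and hH).and (hint.and (eventually_gt_atTop s₀)))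
    have has₀ : s₀ < a := (ha a le_rfl).2.2
    have hIcisub : Ici a ⊆ Ioi s₀ := fun x hx => lt_of_lt_of_le has₀ hx
    have hIoisub : Ioi a ⊆ Ioi s₀ := fun x hx => lt_trans has₀ hx
    -- g'' < 0 on [a, ∞)
    have hgg : ∀ s, a ≤ s → deriv (deriv g) s < 0 := by
      intro s hs
      by_contra hge
      push_neg at hge
      have hg0 : 0 < g s := hgpos s (mem_Ici.mpr (le_of_lt (hIcisub hs)))
      have : 0 ≤ g s * deriv (deriv g) s / (deriv g s) ^ 2 :=
        div_nonneg (mul_nonneg hg0.le hge) (sq_nonneg _)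
      linarith [(ha s hs).1.2]
    -- deriv g is antitone on [a, ∞)
    have hanti : AntitoneOn (deriv g) (Ici a) := by
      refine antitoneOn_of_deriv_nonpos (convex_Ici a) (hcontd.mono hIcisub) ?_ ?_
      · rw [interior_Ici]; exact (hdiffd.mono hIoisub).mono (fun x hx => hx)
      · rw [interior_Ici]; intro x hx; exact (hgg x hx.le).le
    set M := deriv g a with hM
    have hMpos : 0 < M := (ha a le_rfl).1.1
    -- g grows at most linearly: g u ≤ M * u + C
    set C := g a - M * a with hC
    have hlin : ∀ u, a ≤ u → g u ≤ M * u + C := by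
      have hθ : AntitoneOn (fun x => g x - M * x) (Ici a) := by
        refine antitoneOn_of_deriv_nonpos (convex_Ici a) ?_ ?_ ?_
        · exact (hcontg.mono hIcisub).sub (continuous_const.mul continuous_id).continuousOn
        · rw [interior_Ici]
          exact fun x hx => ((hdAt x (hIoisub hx)).sub
            ((differentiable_const M).mul differentiable_id x)).differentiableWithinAt
        · rw [interior_Ici]
          intro x hx
          have hd : HasDerivAt (fun x => g x - M * x) (deriv g x - M) x := by
            have h := ((hdAt x (hIoisub hx)).hasDerivAt.sub
              ((hasDerivAt_id x).const_mul M))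
            simp only [id_eq, mul_one] at h
            exact h
          rw [hd.deriv]
          have := hanti (self_mem_Ici) (mem_Ici.mpr (le_of_lt hx)) (le_of_lt hx)
          linarith
      intro u hu
      have := hθ self_mem_Ici hu hu
      simp only [hC] at *
      linarith
    -- hence 1/u ≤ K * (1/g u) for u large, contradicting integrability
    set b := max a 1 with hb
    have hab : a ≤ b := le_max_left _ _
    have hb1 : (1 : ℝ) ≤ b := le_max_right _ _
    have hb0 : (0 : ℝ) < b := lt_of_lt_of_le one_pos hb1
    set K := M + |C| with hK
    have hKpos : 0 < K := lt_of_lt_of_le hMpos (by simp [hK, abs_nonneg])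
    have hIg : IntegrableOn (fun u => 1 / g u) (Ioi b) :=
      ((ha a le_rfl).2.1).mono_set ((Ioi_subset_Ici_self).trans (Ici_subset_Ici.mpr hab))
    have hIKg : IntegrableOn (fun u => K * (1 / g u)) (Ioi b) := hIg.const_mul K
    have hIinv : IntegrableOn (fun u => u⁻¹) (Ioi b) := by
      refine Integrable.mono' hIKg ?_ ?_
      · exact (measurable_inv.comp measurable_id).aestronglyMeasurable
      · rw [ae_restrict_iff' measurableSet_Ioi]
        refine ae_of_all _ fun u hu => ?_
        have hub : b < u := hu
        have hu0 : (0 : ℝ) < u := lt_trans hb0 hub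
        have hu1 : (1 : ℝ) ≤ u := le_of_lt (lt_of_le_of_lt hb1 hub)
        have hua : a ≤ u := le_of_lt (lt_of_le_of_lt hab hub)
        have hgu : 0 < g u := hgpos u (mem_Ici.mpr (le_of_lt (hIcisub hua)))
        have hgK : g u ≤ K * u := by
          have h1 := hlin u hua
          have h2 : C ≤ |C| := le_abs_self C
          nlinarith [abs_nonneg C]
        rw [Real.norm_eq_abs, abs_inv, abs_of_pos hu0, ← one_div, one_div,
          ← one_div u, ← mul_div_assoc, mul_one]
        rw [div_le_div_iff₀ hu0 hgu]
        linarith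
    have : IntegrableOn (fun x : ℝ => x ^ (-1 : ℝ)) (Ioi b) := by
      refine hIinv.congr_fun (fun x hx => ?_) measurableSet_Ioi
      have hx0 : 0 < x := lt_trans hb0 hx
      rw [Real.rpow_neg hx0.le, Real.rpow_one]
    rw [integrableOn_Ioi_rpow_iff hb0] at this
    linarith
  · -- Case 0 < q < 1 : 1/q > 1, so (g/g')' = 1 - H < -ε eventually,
    -- contradicting positivity of g/g'.
    have hinv : 1 < 1 / q := by rw [lt_div_iff₀ hqpos]; linarith
    set ε := (1 / q - 1) / 2 with hε
    have hεpos : 0 < ε := by simp only [hε]; linarith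
    have hH : ∀ᶠ s in atTop, 1 + ε < g s * deriv (deriv g) s / (deriv g s) ^ 2 :=
      hlim.eventually (eventually_gt_nhds (by simp only [hε]; linarith))
    obtain ⟨a, ha⟩ := eventually_atTop.mp ((hg'.and hH).and (eventually_gt_atTop s₀))
    have has₀ : s₀ < a := (ha a le_rfl).2
    have hIcisub : Ici a ⊆ Ioi s₀ := fun x hx => lt_of_lt_of_le has₀ hx
    have hIoisub : Ioi a ⊆ Ioi s₀ := fun x hx => lt_trans has₀ hx
    -- the function φ = g/g' + εx
    have hder : ∀ x, a ≤ x → HasDerivAt (fun y => g y / deriv g y + ε * y)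
        ((deriv g x * deriv g x - g x * deriv (deriv g) x) / (deriv g x) ^ 2 + ε) x := by
      intro x hx
      have hx' : x ∈ Ioi s₀ := hIcisub hx
      have hfx : deriv g x ≠ 0 := ne_of_gt (ha x hx).1.1
      have h1 : HasDerivAt (fun y => g y / deriv g y)
          ((deriv g x * deriv g x - g x * deriv (deriv g) x) / (deriv g x) ^ 2) x :=
        (hdAt x hx').hasDerivAt.div (hddAt x hx').hasDerivAt hfx
      have h := h1.add ((hasDerivAt_id x).const_mul ε)
      simp only [id_eq, mul_one] at h
      exact h
    have hφanti : AntitoneOn (fun y => g y / deriv g y + ε * y) (Ici a) := by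
      refine antitoneOn_of_deriv_nonpos (convex_Ici a) ?_ ?_ ?_
      · intro x hx
        exact (hder x hx).continuousAt.continuousWithinAt
      · rw [interior_Ici]
        exact fun x hx => (hder x hx.le).differentiableAt.differentiableWithinAt
      · rw [interior_Ici]
        intro x hx
        rw [(hder x hx.le).deriv]
        have hfx : 0 < deriv g x := (ha x hx.le).1.1
        have hHx : 1 + ε < g x * deriv (deriv g) x / (deriv g x) ^ 2 := (ha x hx.le).1.2
        have hsq : (deriv g x) ^ 2 ≠ 0 := ne_of_gt (pow_pos hfx 2)
        have heq : (deriv g x * deriv g x - g x * deriv (deriv g) x) / (deriv g x) ^ 2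
            = 1 - g x * deriv (deriv g) x / (deriv g x) ^ 2 := by
          field_simp
        rw [heq]
        linarith
    -- evaluate at a far point to contradict positivity of g/g'
    set s := a + (g a / deriv g a) / ε + 1 with hs
    have hfa : 0 < deriv g a := (ha a le_rfl).1.1
    have hga : 0 < g a := hgpos a (mem_Ici.mpr (le_of_lt (hIcisub self_mem_Ici)))
    have hfrac : 0 < g a / deriv g a := div_pos hga hfa
    have hsa : a ≤ s := by
      have : 0 < (g a / deriv g a) / ε := div_pos hfrac hεpos
      simp only [hs]; linarith
    have hkey := hφanti self_mem_Ici hsa hsa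
    have hgs : 0 < g s := hgpos s (mem_Ici.mpr (le_of_lt (hIcisub hsa)))
    have hfs : 0 < deriv g s := (ha s hsa).1.1
    have hpos : 0 < g s / deriv g s := div_pos hgs hfs
    have hεs : ε * s = ε * a + g a / deriv g a + ε := by
      simp only [hs]
      field_simp
    simp only at hkey
    rw [hεs] at hkey
    linarith
end

section
/- Let g satisfy (G1) with limit 1/q. Then g is strictly increasing and convex for all sufficiently large s, and g(s) → ∞ as s → ∞. -/
open Real Filter Set MeasureTheory

/-- A function bounded below by a positive constant on `Ici S` is not integrable there. -/
lemma aux_not_int_const (f : ℝ → ℝ) (S c : ℝ) (hc : 0 < c)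
    (hf : ∀ u ∈ Ici S, c ≤ f u) : ¬ IntegrableOn f (Ici S) := by
  intro h
  have h1 : IntegrableOn (fun _ => c) (Ici S) := by
    refine h.mono' aestronglyMeasurable_const ?_
    filter_upwards [ae_restrict_mem measurableSet_Ici] with u hu
    rw [Real.norm_eq_abs, abs_of_pos hc]
    exact hf u hu
  rw [integrableOn_const_iff] at h1
  rcases h1 with h1 | h1
  · exact hc.ne' (by simpa using h1)
  · simp [Real.volume_Ici] at h1

/-- A function bounded below by `c / u` on `Ici S` with `c > 0`, `S > 0`,
is not integrable there. -/
lemma aux_not_int_inv (f : ℝ → ℝ) (S c : ℝ) (hS : 0 < S) (hc : 0 < c)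
    (hf : ∀ u ∈ Ici S, c / u ≤ f u) : ¬ IntegrableOn f (Ici S) := by
  intro h
  have h1 : IntegrableOn (fun u => c / u) (Ici S) := by
    refine h.mono' ((measurable_const.div measurable_id).aestronglyMeasurable) ?_
    filter_upwards [ae_restrict_mem measurableSet_Ici] with u hu
    have hu' : 0 < u := lt_of_lt_of_le hS hu
    rw [Real.norm_eq_abs, abs_of_nonneg (by positivity)]
    exact hf u hu
  have h2 : IntegrableOn (fun u : ℝ => u⁻¹) (Ici S) := by
    have h3 := h1.const_mul c⁻¹
    have heq : (fun u : ℝ => c⁻¹ * (c / u)) = fun u : ℝ => u⁻¹ := by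
      funext u
      rw [div_eq_mul_inv, ← mul_assoc, inv_mul_cancel₀ hc.ne', one_mul]
    rwa [heq] at h3
  exact not_IntegrableOn_Ioi_inv (h2.mono Ioi_subset_Ici_self le_rfl)

/-- Continuous nonvanishing function on `Ici a` positive at `a` is positive everywhere. -/
lemma aux_sign_const {f : ℝ → ℝ} {a : ℝ} (hf : ContinuousOn f (Ici a))
    (hne : ∀ s ∈ Ici a, f s ≠ 0) (h : 0 < f a) : ∀ s ∈ Ici a, 0 < f s := by
  intro s hs
  rcases (hne s hs).lt_or_gt with hneg | hpos
  · exfalso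
    have hsub : Icc a s ⊆ Ici a := Icc_subset_Ici_self
    obtain ⟨x, hx, hfx⟩ := intermediate_value_Icc' hs (hf.mono hsub) ⟨hneg.le, h.le⟩
    exact hne x (hsub hx) hfx
  · exact hpos

/-- Under (G1), g is strictly increasing and convex for all
sufficiently large s, and g(s) → ∞ as s → ∞. -/
theorem stmt_1 (g : ℝ → ℝ) (s₀ q : ℝ) (hq : q ≠ 0)
    (hC2 : ContDiffOn ℝ 2 g (Ici s₀))
    (hgpos : ∀ s ∈ Ici s₀, 0 < g s)
    (hint : ∀ᶠ s in atTop, IntegrableOn (fun u => 1 / g u) (Ici s))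
    (hlim : Tendsto (fun s => g s * deriv (deriv g) s / (deriv g s) ^ 2)
      atTop (nhds (1 / q))) :
    ∃ s₁, StrictMonoOn g (Ici s₁) ∧ ConvexOn ℝ (Ici s₁) g ∧
      Tendsto g atTop atTop := by
  have h1q : (1 : ℝ) / q ≠ 0 := one_div_ne_zero hq
  have hcg : ContinuousOn g (Ici s₀) := hC2.continuousOn
  have hcd : ContinuousOn (deriv g) (Ioi s₀) :=
    (hC2.mono Ioi_subset_Ici_self).continuousOn_deriv_of_isOpen isOpen_Ioi (by norm_num)
  -- Step 1 : pick `A > s₀` beyond which `H ≠ 0`, hence `deriv g ≠ 0`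
  have hHne : ∀ᶠ s in atTop, g s * deriv (deriv g) s / (deriv g s) ^ 2 ≠ 0 :=
    hlim.eventually_ne h1q
  obtain ⟨A₀, hA₀⟩ := eventually_atTop.mp (hHne.and (eventually_gt_atTop s₀))
  set A := max A₀ (s₀ + 1) with hA_def
  have hA_gt : s₀ < A := lt_of_lt_of_le (by linarith) (le_max_right _ _)
  have hAprop : ∀ s, A ≤ s → g s * deriv (deriv g) s / (deriv g s) ^ 2 ≠ 0 ∧ s₀ < s :=
    fun s hs => hA₀ s (le_trans (le_max_left _ _) hs)
  have hdne : ∀ s, A ≤ s → deriv g s ≠ 0 := by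
    intro s hs h0
    exact (hAprop s hs).1 (by rw [h0]; simp)
  have hIciA : Ici A ⊆ Ioi s₀ := fun x hx => lt_of_lt_of_le hA_gt hx
  have hIciA' : Ici A ⊆ Ici s₀ := fun x hx => mem_Ici.mpr (mem_Ioi.mp (hIciA hx)).le
  have hgposA : ∀ s, A ≤ s → 0 < g s := fun s hs => hgpos s (hIciA' hs)
  -- Step 2 : `deriv g` has constant sign on `Ici A`; negative sign is impossible.
  have hdpos : ∀ s, A ≤ s → 0 < deriv g s := by
    rcases (hdne A le_rfl).lt_or_gt with hneg | hpos
    · -- deriv g < 0 everywhere on Ici A, contradiction with integrability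
      exfalso
      have hnegall : ∀ s ∈ Ici A, 0 < -deriv g s := by
        have := aux_sign_const (f := fun s => -deriv g s) (a := A)
          ((hcd.mono hIciA).neg) (fun s hs h0 => hdne s hs (by linarith [neg_eq_zero.mp h0]))
          (by simpa using hneg)
        simpa using this
      have hanti : StrictAntiOn g (Ici A) := by
        refine strictAntiOn_of_deriv_neg (convex_Ici A) (hcg.mono hIciA') ?_
        intro x hx
        rw [interior_Ici] at hx
        have := hnegall x (mem_Ici.mpr (le_of_lt (mem_Ioi.mp hx)))
        linarith
      obtain ⟨S, hS_int, hS_ge⟩ := (hint.and (eventually_ge_atTop (A + 1))).exists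
      refine aux_not_int_const (fun u => 1 / g u) S (1 / g A)
        (by have := hgposA A le_rfl; positivity) ?_ hS_int
      intro u hu
      have huA : A < u := by
        have : A + 1 ≤ u := le_trans hS_ge hu
        linarith
      have hgu : 0 < g u := hgposA u huA.le
      have : g u < g A := hanti (mem_Ici.mpr le_rfl) (mem_Ici.mpr huA.le) huA
      exact one_div_le_one_div_of_le hgu this.le
    · exact fun s hs =>
        aux_sign_const (hcd.mono hIciA) (fun t ht => hdne t ht) hpos s hs
  -- Step 3 : case on the sign of `1/q`.
  rcases h1q.lt_or_gt with hqneg | hqpos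
  · -- `1/q < 0` : eventually `g'' < 0`, g grows at most linearly, contradiction.
    exfalso
    have hH : ∀ᶠ s in atTop, g s * deriv (deriv g) s / (deriv g s) ^ 2 < 0 :=
      hlim.eventually (eventually_lt_nhds hqneg)
    obtain ⟨B₀, hB₀⟩ := eventually_atTop.mp hH
    set B := max B₀ A with hB_def
    have hBA : A ≤ B := le_max_right _ _
    have hDneg : ∀ s, B ≤ s → deriv (deriv g) s < 0 := by
      intro s hs
      have hH' := hB₀ s (le_trans (le_max_left _ _) hs)
      have hd2 : 0 < (deriv g s) ^ 2 := pow_pos (hdpos s (le_trans hBA hs)) 2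
      have hgs : 0 < g s := hgposA s (le_trans hBA hs)
      nlinarith [div_lt_iff₀ hd2 |>.mp hH']
    -- `deriv g` is antitone on `Ici B`
    have hanti : AntitoneOn (deriv g) (Ici B) := by
      refine antitoneOn_of_deriv_nonpos (convex_Ici B)
        (hcd.mono fun x hx => hIciA (le_trans hBA hx)) ?_ ?_
      · intro x hx
        rw [interior_Ici] at hx
        exact (differentiableAt_of_deriv_ne_zero
          (hDneg x hx.le).ne).differentiableWithinAt
      · intro x hx
        rw [interior_Ici] at hx
        exact (hDneg x hx.le).le
    set C := deriv g B with hC_def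
    have hC : 0 < C := hdpos B hBA
    have hlin : ∀ y ∈ Ici B, g y ≤ g B + C * (y - B) := by
      have hb := (convex_Ici B).image_sub_le_mul_sub_of_deriv_le
        (f := g) (C := C) (hcg.mono fun x hx => hIciA' (le_trans hBA hx))
        (fun x hx => by
          rw [interior_Ici] at hx
          exact (differentiableAt_of_deriv_ne_zero
            (hdpos x (le_trans hBA hx.le)).ne').differentiableWithinAt)
        (fun x hx => by
          rw [interior_Ici] at hx
          exact hanti (mem_Ici.mpr le_rfl) (mem_Ici.mpr (mem_Ioi.mp hx).le) (mem_Ioi.mp hx).le)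
      intro y hy
      have := hb B self_mem_Ici y hy (mem_Ici.mp hy)
      linarith
    -- choose a large `S` where `1/g` is integrable and compare with `1/(2Cu)`
    obtain ⟨S, hS_int, hS_ge⟩ :=
      (hint.and (eventually_ge_atTop (max (max B 1) ((g B - C * B) / C)))).exists
    have hSB : B ≤ S := le_trans (le_max_left _ _) (le_trans (le_max_left _ _) hS_ge)
    have hS1 : (1 : ℝ) ≤ S := le_trans (le_max_right _ _) (le_trans (le_max_left _ _) hS_ge)
    have hSC : (g B - C * B) / C ≤ S := le_trans (le_max_right _ _) hS_ge
    refine aux_not_int_inv (fun u => 1 / g u) S (1 / (2 * C)) (by linarith)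
      (by positivity) ?_ hS_int
    intro u hu
    have huB : B ≤ u := le_trans hSB hu
    have hgu : 0 < g u := hgposA u (le_trans hBA huB)
    have hub : g u ≤ 2 * C * u := by
      have h1 := hlin u huB
      have h2 : (g B - C * B) / C ≤ u := le_trans hSC hu
      have h3 : g B - C * B ≤ C * u := by
        rw [div_le_iff₀ hC] at h2; linarith [h2]
      linarith
    have h2Cu : 0 < 2 * C * u := lt_of_lt_of_le hgu hub
    have := one_div_le_one_div_of_le hgu hub
    calc 1 / (2 * C) / u = 1 / (2 * C * u) := by
          rw [div_div]
      _ ≤ 1 / g u := this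
  · -- `1/q > 0` : eventually `g'' > 0`, and everything follows.
    have hH : ∀ᶠ s in atTop, 0 < g s * deriv (deriv g) s / (deriv g s) ^ 2 :=
      hlim.eventually (eventually_gt_nhds hqpos)
    obtain ⟨B₀, hB₀⟩ := eventually_atTop.mp hH
    set B := max B₀ A with hB_def
    have hBA : A ≤ B := le_max_right _ _
    have hIciB : Ici B ⊆ Ici s₀ := fun x hx => hIciA' (le_trans hBA hx)
    have hDpos : ∀ s, B ≤ s → 0 < deriv (deriv g) s := by
      intro s hs
      have hH' := hB₀ s (le_trans (le_max_left _ _) hs)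
      have hd2 : 0 < (deriv g s) ^ 2 := pow_pos (hdpos s (le_trans hBA hs)) 2
      have hgs : 0 < g s := hgposA s (le_trans hBA hs)
      nlinarith [(lt_div_iff₀ hd2).mp hH']
    refine ⟨B, ?_, ?_, ?_⟩
    · refine strictMonoOn_of_deriv_pos (convex_Ici B) (hcg.mono hIciB) ?_
      intro x hx
      rw [interior_Ici] at hx
      exact hdpos x (le_trans hBA hx.le)
    · refine (strictConvexOn_of_deriv2_pos (convex_Ici B) (hcg.mono hIciB) ?_).convexOn
      intro x hx
      rw [interior_Ici] at hx
      have : deriv^[2] g x = deriv (deriv g) x := by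
        rw [Function.iterate_succ, Function.iterate_one]; rfl
      rw [this]
      exact hDpos x hx.le
    · -- growth : `deriv g` is monotone, bounded below by `deriv g B > 0`
      have hmono : StrictMonoOn (deriv g) (Ici B) := by
        refine strictMonoOn_of_deriv_pos (convex_Ici B)
          (hcd.mono fun x hx => hIciA (le_trans hBA hx)) ?_
        intro x hx
        rw [interior_Ici] at hx
        exact hDpos x hx.le
      set C := deriv g B with hC_def
      have hC : 0 < C := hdpos B hBA
      have hgrow := (convex_Ici B).mul_sub_le_image_sub_of_le_deriv
        (f := g) (C := C) (hcg.mono hIciB)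
        (fun x hx => by
          rw [interior_Ici] at hx
          exact (differentiableAt_of_deriv_ne_zero
            (hdpos x (le_trans hBA hx.le)).ne').differentiableWithinAt)
        (fun x hx => by
          rw [interior_Ici] at hx
          exact (hmono self_mem_Ici (mem_Ici.mpr hx.le) hx).le)
      have hlow : ∀ᶠ y in atTop, g B + C * (y - B) ≤ g y := by
        filter_upwards [eventually_ge_atTop B] with y hy
        have := hgrow B self_mem_Ici y (mem_Ici.mpr hy) hy
        linarith
      refine tendsto_atTop_mono' atTop hlow ?_
      have h1 : Tendsto (fun y : ℝ => y - B) atTop atTop :=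
        tendsto_atTop_add_const_right _ _ tendsto_id
      have h2 : Tendsto (fun y : ℝ => C * (y - B)) atTop atTop :=
        h1.const_mul_atTop hC
      exact tendsto_atTop_add_const_left _ _ h2
end

section
/- Assume g satisfies (G1) with limit 1/q. Then lim_{s→∞} g(s)/(s g'(s)) = 1 - 1/q. -/
open Real Filter Set MeasureTheory

lemma aux_div_linear (f f' : ℝ → ℝ) (c a : ℝ)
    (hder : ∀ s, a ≤ s → HasDerivAt f (f' s) s)
    (hl : Tendsto f' atTop (nhds c)) :
    Tendsto (fun s => f s / s) atTop (nhds c) := by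
  rw [Metric.tendsto_atTop] at hl ⊢
  intro ε hε
  obtain ⟨b₀, hb₀⟩ := hl (ε/2) (by linarith)
  set b := max a (max b₀ 1) with hb
  have hba : a ≤ b := le_max_left _ _
  have hbb₀ : b₀ ≤ b := le_trans (le_max_left _ _) (le_max_right _ _)
  have hb1 : (1:ℝ) ≤ b := le_trans (le_max_right _ _) (le_max_right _ _)
  set K := |f b - c * b| with hK
  have key : ∀ s, b ≤ s → |f s - c * s - (f b - c * b)| ≤ ε/2 * (s - b) := by
    intro s hs
    have := (convex_Ici b).norm_image_sub_le_of_norm_hasDerivWithin_le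
      (f' := fun x => f' x - c) (f := fun x => f x - c * x) (C := ε/2)
      (fun x hx => (((hder x (le_trans hba hx)).sub
        ((hasDerivAt_id x).const_mul c)).hasDerivWithinAt).congr_deriv (by ring))
      (fun x hx => by
        have := hb₀ x (le_trans hbb₀ hx)
        rw [Real.dist_eq] at this
        simpa using this.le)
      (self_mem_Ici) hs
    rw [Real.norm_eq_abs] at this
    calc |f s - c * s - (f b - c * b)| ≤ ε/2 * ‖s - b‖ := this
      _ = ε/2 * (s - b) := by rw [Real.norm_eq_abs, abs_of_nonneg (by linarith)]
  refine ⟨max b (2 * K / ε + 1), fun s hs => ?_⟩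
  have hsb : b ≤ s := le_trans (le_max_left _ _) hs
  have hsK : 2 * K / ε + 1 ≤ s := le_trans (le_max_right _ _) hs
  have hs0 : 0 < s := by linarith
  have h1 : |f s - c * s| ≤ K + ε/2 * (s - b) := by
    have := key s hsb
    calc |f s - c * s| ≤ |f s - c * s - (f b - c * b)| + |f b - c * b| := by
          have := abs_sub_abs_le_abs_sub (f s - c * s) (f b - c * b); have := abs_add_le (f s - c * s - (f b - c * b)) (f b - c * b); simp only [sub_add_cancel] at this; linarith
      _ ≤ ε/2 * (s - b) + K := by linarith
      _ = K + ε/2 * (s - b) := by ring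
  rw [Real.dist_eq]
  have : |f s / s - c| = |f s - c * s| / s := by
    rw [show f s / s - c = (f s - c * s) / s by field_simp]
    rw [abs_div, abs_of_pos hs0]
  rw [this]
  have hKnn : 0 ≤ K := abs_nonneg _
  have hlt : K / s < ε / 2 := by
    rw [div_lt_iff₀ hs0]
    have : 2 * K / ε < s := by linarith
    rw [div_lt_iff₀ hε] at this
    linarith
  have : |f s - c * s| / s ≤ K / s + ε/2 * (s - b) / s := by
    rw [← add_div]; gcongr
  have h2 : ε/2 * (s - b) / s ≤ ε/2 := by
    rw [div_le_iff₀ hs0]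
    nlinarith
  linarith

/-- Under (G1), g(s)/(s·g'(s)) → 1 - 1/q as s → ∞. -/
theorem stmt_2 (g : ℝ → ℝ) (s₀ q : ℝ) (hq : 1 ≤ q)
    (hC2 : ContDiffOn ℝ 2 g (Ici s₀))
    (hgpos : ∀ s ∈ Ici s₀, 0 < g s)
    (hint : ∀ᶠ s in atTop, IntegrableOn (fun u => 1 / g u) (Ici s))
    (hlim : Tendsto (fun s => g s * deriv (deriv g) s / (deriv g s) ^ 2)
      atTop (nhds (1 / q))) :
    Tendsto (fun s => g s / (s * deriv g s)) atTop (nhds (1 - 1 / q)) := by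
  have hq0 : (0:ℝ) < q := lt_of_lt_of_le one_pos hq
  have hq1 : (0:ℝ) < 1 / q := by positivity
  -- eventually H s > 0 and s > s₀
  have hHpos : ∀ᶠ s in atTop, 0 < g s * deriv (deriv g) s / (deriv g s) ^ 2 :=
    hlim.eventually (eventually_gt_nhds hq1)
  obtain ⟨a₀, ha₀⟩ := (hHpos.and (eventually_gt_atTop s₀)).exists_forall_of_atTop
  set a := max a₀ (s₀ + 1) with haa
  have ha : ∀ s, a ≤ s → 0 < g s * deriv (deriv g) s / (deriv g s) ^ 2 ∧ s₀ < s :=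
    fun s hs => ha₀ s (le_trans (le_max_left _ _) hs)
  -- basic facts
  have hC2' : ContDiffOn ℝ 2 g (Ioi s₀) := hC2.mono Ioi_subset_Ici_self
  have hd1 : ContDiffOn ℝ 1 (deriv g) (Ioi s₀) :=
    hC2'.deriv_of_isOpen isOpen_Ioi (by norm_num)
  have hgd : ∀ s ∈ Ioi s₀, HasDerivAt g (deriv g s) s := fun s hs =>
    ((hC2'.differentiableOn (by norm_num)).differentiableAt
      (isOpen_Ioi.mem_nhds hs)).hasDerivAt
  have hgd2 : ∀ s ∈ Ioi s₀, HasDerivAt (deriv g) (deriv (deriv g) s) s := fun s hs =>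
    ((hd1.differentiableOn (by norm_num)).differentiableAt
      (isOpen_Ioi.mem_nhds hs)).hasDerivAt
  have hg : ∀ s, a ≤ s → 0 < g s := fun s hs => hgpos s (le_of_lt (ha s hs).2)
  have hne : ∀ s, a ≤ s → deriv g s ≠ 0 := by
    intro s hs h
    have := (ha s hs).1
    rw [h] at this
    simp at this
  -- deriv g > 0 on [a, ∞)
  have hpos : ∀ s, a ≤ s → 0 < deriv g s := by
    by_contra h
    push_neg at h
    obtain ⟨x, hx, hx0⟩ := h
    have hxneg : deriv g x < 0 := lt_of_le_of_ne hx0 (hne x hx)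
    -- then deriv g < 0 on all of [a, ∞)
    have hallneg : ∀ y, a ≤ y → deriv g y < 0 := by
      intro y hy
      rcases lt_or_ge (deriv g y) 0 with h' | h'
      · exact h'
      have hypos : 0 < deriv g y := lt_of_le_of_ne h' (Ne.symm (hne y hy))
      have hsub : uIcc x y ⊆ Ioi s₀ := by
        have h1 : uIcc x y ⊆ Ici a := by
          rw [uIcc_eq_union]
          refine union_subset (Icc_subset_Ici_self.trans (Ici_subset_Ici.mpr hx))
            (Icc_subset_Ici_self.trans (Ici_subset_Ici.mpr hy))
        exact h1.trans (fun z hz => lt_of_lt_of_le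
          (lt_of_lt_of_le (lt_add_one s₀) (le_max_right a₀ (s₀+1))) hz)
      have hsubA : uIcc x y ⊆ Ici a := by
        rw [uIcc_eq_union]
        exact union_subset (Icc_subset_Ici_self.trans (Ici_subset_Ici.mpr hx))
          (Icc_subset_Ici_self.trans (Ici_subset_Ici.mpr hy))
      have hivt := intermediate_value_uIcc (hd1.continuousOn.mono hsub)
      have h0 : (0:ℝ) ∈ uIcc (deriv g x) (deriv g y) := by
        rw [mem_uIcc]; exact Or.inl ⟨hxneg.le, hypos.le⟩
      obtain ⟨z, hz, hz0⟩ := hivt h0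
      exact absurd hz0 (hne z (hsubA hz))
    -- g antitone on [a, ∞), contradicting integrability of 1/g
    have hs₀a : s₀ ≤ a := le_trans (by linarith) (le_max_right a₀ (s₀+1))
    have hanti : AntitoneOn g (Ici a) := by
      refine antitoneOn_of_deriv_nonpos (convex_Ici a)
        (hC2.continuousOn.mono (Ici_subset_Ici.mpr hs₀a)) ?_ ?_
      · intro z hz
        rw [interior_Ici] at hz
        exact ((hC2'.differentiableOn (by norm_num)).differentiableAt
          (isOpen_Ioi.mem_nhds (lt_of_le_of_lt hs₀a hz))).differentiableWithinAt
      · intro z hz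
        rw [interior_Ici] at hz
        exact (hallneg z hz.le).le
    obtain ⟨m, hm⟩ := eventually_atTop.1 hint
    set t := max m a with ht
    have hti : IntegrableOn (fun u => 1 / g u) (Ici t) := hm t (le_max_left _ _)
    have hgt : 0 < g t := hg t (le_max_right _ _)
    have hconst : IntegrableOn (fun _ : ℝ => 1 / g t) (Ici t) := by
      refine MeasureTheory.Integrable.mono hti aestronglyMeasurable_const ?_
      filter_upwards [ae_restrict_mem measurableSet_Ici] with u hu
      have hut : t ≤ u := hu
      have hgu : 0 < g u := hg u (le_trans (le_max_right m a) hut)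
      have hle : g u ≤ g t := hanti (le_max_right m a) (le_trans (le_max_right m a) hut) hut
      rw [Real.norm_eq_abs, Real.norm_eq_abs, abs_of_pos (by positivity),
        abs_of_pos (by positivity)]
      exact one_div_le_one_div_of_le hgu hle
    rcases (integrableOn_const_iff (C := 1 / g t)).mp hconst with h | h
    · exact absurd h (by rw [enorm_eq_zero]; positivity)
    · rw [Real.volume_Ici] at h
      exact absurd h (by simp)
  -- main argument via f = g / g'
  set F := fun s => g s / deriv g s with hF
  set F' := fun s => (deriv g s * deriv g s - g s * deriv (deriv g) s) / (deriv g s) ^ 2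
    with hF'
  have hFd : ∀ s, a ≤ s → HasDerivAt F (F' s) s := fun s hs =>
    (hgd s (ha s hs).2).div (hgd2 s (ha s hs).2) (hne s hs)
  have hlim' : Tendsto F' atTop (nhds (1 - 1 / q)) := by
    have h1 : Tendsto (fun s => 1 - g s * deriv (deriv g) s / (deriv g s) ^ 2)
        atTop (nhds (1 - 1 / q)) := tendsto_const_nhds.sub hlim
    refine h1.congr' ?_
    filter_upwards [eventually_ge_atTop a] with s hs
    have h2 := hne s hs
    rw [hF']
    field_simp
  have key := aux_div_linear F F' (1 - 1 / q) a hFd hlim'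
  refine key.congr fun s => ?_
  rw [hF]
  rw [div_div, mul_comm]
end

section
/- Assume g satisfies (G1) with limit 1/q. Then lim_{s→∞} (log s)/(log g(s)) = 1 - 1/q. -/
open Real Filter Set MeasureTheory

lemma tendsto_div_self_of_hasDerivAt {f f' : ℝ → ℝ} {L : ℝ}
    (hd : ∀ᶠ x in atTop, HasDerivAt f (f' x) x)
    (hl : Tendsto f' atTop (nhds L)) :
    Tendsto (fun x => f x / x) atTop (nhds L) := by
  rw [Metric.tendsto_nhds]
  intro ε hε
  have hε4 : 0 < ε / 4 := by linarith
  have h1 : ∀ᶠ x in atTop, HasDerivAt f (f' x) x ∧ |f' x - L| ≤ ε / 4 := by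
    filter_upwards [hd, Metric.tendsto_nhds.mp hl (ε/4) hε4] with x h1 h2
    exact ⟨h1, by rw [Real.dist_eq] at h2; linarith⟩
  obtain ⟨a, ha⟩ := eventually_atTop.mp h1
  set F : ℝ → ℝ := fun y => f y - L * y with hF
  have key : ∀ x ∈ Ici a, ‖F x - F a‖ ≤ ε/4 * ‖x - a‖ := by
    intro x hx
    refine Convex.norm_image_sub_le_of_norm_hasDerivWithin_le
      (f' := fun y => f' y - L) (fun y hy => ?_) (fun y hy => ?_) (convex_Ici a)
      self_mem_Ici hx
    · exact (((ha y hy).1).sub (by simpa using (hasDerivAt_id y).const_mul L)).hasDerivWithinAt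
    · rw [Real.norm_eq_abs]; exact (ha y hy).2
  set B : ℝ := |F a|
  filter_upwards [eventually_ge_atTop (max (max a 1) (4 * (B + 1 + ε * |a|) / ε))] with x hx
  have hxa : a ≤ x := le_trans (le_trans (le_max_left a 1) (le_max_left _ _)) hx
  have hx1 : (1:ℝ) ≤ x := le_trans (le_trans (le_max_right a 1) (le_max_left _ _)) hx
  have hxB : 4 * (B + 1 + ε * |a|) / ε ≤ x := le_trans (le_max_right _ _) hx
  have hx0 : 0 < x := by linarith
  have hFx : |F x| ≤ B + ε/4 * (x - a) := by
    have := key x hxa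
    rw [Real.norm_eq_abs, Real.norm_eq_abs, abs_of_nonneg (by linarith : (0:ℝ) ≤ x - a)] at this
    have h2 := abs_sub_abs_le_abs_sub (F x) (F a)
    linarith
  have heq : f x / x - L = F x / x := by field_simp [hF]; ring
  rw [Real.dist_eq, heq, abs_div, abs_of_pos hx0]
  rw [div_lt_iff₀ hx0]
  have hB0 : 0 ≤ B := abs_nonneg _
  have h4 : 4 * (B + 1 + ε * |a|) ≤ ε * x := by
    rw [div_le_iff₀ hε] at hxB; linarith
  nlinarith [abs_nonneg (F x), mul_le_mul_of_nonneg_left (neg_abs_le a) hε.le, mul_nonneg hε.le (abs_nonneg a)]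

lemma tendsto_div_self_atTop_of_hasDerivAt {f f' : ℝ → ℝ}
    (hd : ∀ᶠ x in atTop, HasDerivAt f (f' x) x)
    (hl : Tendsto f' atTop atTop) :
    Tendsto (fun x => f x / x) atTop atTop := by
  rw [tendsto_atTop]
  intro M
  set M' := |M| + 1 with hM'
  have h1 : ∀ᶠ x in atTop, HasDerivAt f (f' x) x ∧ M' ≤ f' x := by
    filter_upwards [hd, tendsto_atTop.mp hl M'] with x h1 h2 using ⟨h1, h2⟩
  obtain ⟨a, ha⟩ := eventually_atTop.mp h1
  set F : ℝ → ℝ := fun y => f y - M' * y with hF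
  have hmono : MonotoneOn F (Ici a) := by
    refine monotoneOn_of_deriv_nonneg (convex_Ici a) (fun x hx => ?_) (fun x hx => ?_)
      (fun x hx => ?_)
    · exact (((ha x hx).1).sub (by simpa using (hasDerivAt_id x).const_mul M')).continuousAt.continuousWithinAt
    · rw [interior_Ici] at hx
      exact (((ha x (le_of_lt hx)).1).sub (by simpa using (hasDerivAt_id x).const_mul M')).differentiableAt.differentiableWithinAt
    · rw [interior_Ici] at hx
      have hD : HasDerivAt F (f' x - M') x :=
        ((ha x (le_of_lt hx)).1).sub (by simpa using (hasDerivAt_id x).const_mul M')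
      rw [hD.deriv]
      have := (ha x (le_of_lt hx)).2
      linarith
  set B : ℝ := |F a|
  filter_upwards [eventually_ge_atTop (max (max a 1) B)] with x hx
  have hxa : a ≤ x := le_trans (le_trans (le_max_left a 1) (le_max_left _ _)) hx
  have hx1 : (1:ℝ) ≤ x := le_trans (le_trans (le_max_right a 1) (le_max_left _ _)) hx
  have hxB : B ≤ x := le_trans (le_max_right _ _) hx
  have hx0 : 0 < x := by linarith
  have hFa : F a ≤ F x := hmono self_mem_Ici hxa hxa
  rw [le_div_iff₀ hx0]
  have h2 : -B ≤ F a := neg_abs_le _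
  have hM0 : |M| + 1 ≥ 0 := by positivity
  have : f x = F x + M' * x := by simp [hF]
  nlinarith [abs_nonneg M, le_abs_self M]

/-- Under (G1), (log s)/(log g(s)) → 1 - 1/q as s → ∞. -/
theorem stmt_3 (g : ℝ → ℝ) (s₀ q : ℝ) (hq : 1 ≤ q)
    (hC2 : ContDiffOn ℝ 2 g (Ici s₀))
    (hgpos : ∀ s ∈ Ici s₀, 0 < g s)
    (hint : ∀ᶠ s in atTop, IntegrableOn (fun u => 1 / g u) (Ici s))
    (hlim : Tendsto (fun s => g s * deriv (deriv g) s / (deriv g s) ^ 2)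
      atTop (nhds (1 / q))) :
    Tendsto (fun s => Real.log s / Real.log (g s)) atTop (nhds (1 - 1 / q)) := by
  have hq0 : (0:ℝ) < q := lt_of_lt_of_le one_pos hq
  have hqinv : (0:ℝ) < 1 / q := by positivity
  -- eventually the quotient H is positive and deriv g ≠ 0
  have hHpos : ∀ᶠ s in atTop, 0 < g s * deriv (deriv g) s / (deriv g s) ^ 2 :=
    hlim.eventually (eventually_gt_nhds hqinv)
  have hne : ∀ᶠ s in atTop, deriv g s ≠ 0 := by
    filter_upwards [hHpos] with s hs
    intro h
    rw [h] at hs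
    simp at hs
  -- derivative facts on Ioi s₀
  have hopen : ContDiffOn ℝ 2 g (Ioi s₀) := hC2.mono Ioi_subset_Ici_self
  have hg1 : ∀ s ∈ Ioi s₀, HasDerivAt g (deriv g s) s := fun s hs =>
    ((hopen.differentiableOn (by norm_num)).differentiableAt (isOpen_Ioi.mem_nhds hs)).hasDerivAt
  have hd2cd : ContDiffOn ℝ 1 (deriv g) (Ioi s₀) := hopen.deriv_of_isOpen isOpen_Ioi (by norm_num)
  have hg2 : ∀ s ∈ Ioi s₀, HasDerivAt (deriv g) (deriv (deriv g) s) s := fun s hs =>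
    ((hd2cd.differentiableOn (by norm_num)).differentiableAt (isOpen_Ioi.mem_nhds hs)).hasDerivAt
  have hcont : ContinuousOn (deriv g) (Ioi s₀) := hd2cd.continuousOn
  -- find a with deriv g never 0 on Ici a
  obtain ⟨a, ha⟩ := eventually_atTop.mp (hne.and (eventually_gt_atTop s₀))
  have has₀ : s₀ < a := (ha a le_rfl).2
  have hIci : Ici a ⊆ Ioi s₀ := fun x hx => lt_of_lt_of_le has₀ hx
  -- IVT exclusions
  have hzero : ∀ s ∈ Ici a, deriv g a < 0 → 0 < deriv g s → False := by
    intro s hs h1 h2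
    have : (0:ℝ) ∈ deriv g '' Icc a s := by
      apply intermediate_value_Icc hs (hcont.mono (fun x hx => hIci hx.1))
      exact ⟨h1.le, h2.le⟩
    obtain ⟨c, hc, hc0⟩ := this
    exact (ha c hc.1).1 hc0
  have hzero' : ∀ s ∈ Ici a, deriv g s < 0 → 0 < deriv g a → False := by
    intro s hs h1 h2
    have : (0:ℝ) ∈ deriv g '' Icc a s := by
      apply intermediate_value_Icc' hs (hcont.mono (fun x hx => hIci hx.1))
      exact ⟨h1.le, h2.le⟩
    obtain ⟨c, hc, hc0⟩ := this
    exact (ha c hc.1).1 hc0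
  have hcontg : ContinuousOn g (Ici a) := fun x hx =>
    (hg1 x (hIci hx)).continuousAt.continuousWithinAt
  -- deriv g > 0 on Ici a
  have hpos : ∀ s ∈ Ici a, 0 < deriv g s := by
    have hga : 0 < deriv g a := by
      rcases (ha a le_rfl).1.lt_or_gt with h | h
      · exfalso
        have hneg : ∀ s ∈ Ici a, deriv g s < 0 := fun s hs =>
          ((ha s hs).1.lt_or_gt).resolve_right fun h' => hzero s hs h h'
        have hanti : AntitoneOn g (Ici a) := by
          apply antitoneOn_of_deriv_nonpos (convex_Ici a) hcontg
          · intro x hx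
            rw [interior_Ici] at hx
            exact (hg1 x (hIci (mem_Ici.mpr hx.le))).differentiableAt.differentiableWithinAt
          · intro x hx
            rw [interior_Ici] at hx
            exact (hneg x (mem_Ici.mpr hx.le)).le
        obtain ⟨b0, hb0⟩ := eventually_atTop.mp hint
        set b := max b0 a with hb
        have hba : a ≤ b := le_max_right _ _
        have hib : IntegrableOn (fun u => 1 / g u) (Ici b) := hb0 b (le_max_left _ _)
        have hgb : 0 < g b := hgpos b (mem_Ici.mpr (le_of_lt (hIci hba)))
        have hconst : IntegrableOn (fun _ => 1 / g b) (Ici b) := by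
          apply Integrable.mono hib aestronglyMeasurable_const
          rw [ae_restrict_iff' measurableSet_Ici]
          filter_upwards with x hx
          have hgx : 0 < g x := hgpos x (mem_Ici.mpr (le_of_lt (hIci (le_trans hba hx))))
          have hle : g x ≤ g b := hanti hba (le_trans hba hx) hx
          rw [Real.norm_eq_abs, Real.norm_eq_abs, abs_of_pos (by positivity),
            abs_of_pos (by positivity)]
          exact one_div_le_one_div_of_le hgx hle
        rcases (integrableOn_const_iff (C := 1 / g b)).mp hconst with h0 | hmeas
        · exact absurd h0 (by simp [hgb.ne'])
        · rw [Real.volume_Ici] at hmeas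
          exact absurd hmeas (by simp)
      · exact h
    intro s hs
    exact ((ha s hs).1.lt_or_gt).resolve_left fun h' => hzero' s hs h' hga
  -- derivative of φ = g / g'
  have hφd : ∀ᶠ s in atTop, HasDerivAt (fun u => g u / deriv g u)
      (1 - g s * deriv (deriv g) s / (deriv g s) ^ 2) s := by
    filter_upwards [eventually_ge_atTop a] with s hs
    have hs₀ : s ∈ Ioi s₀ := hIci hs
    have hne : deriv g s ≠ 0 := (hpos s hs).ne'
    have h : HasDerivAt (fun u => g u / deriv g u) _ s := (hg1 s hs₀).div (hg2 s hs₀) hne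
    convert h using 1
    rw [eq_div_iff (pow_ne_zero 2 hne), sub_mul, div_mul_cancel₀ _ (pow_ne_zero 2 hne)]
    ring
  have hD : Tendsto (fun s => 1 - g s * deriv (deriv g) s / (deriv g s) ^ 2)
      atTop (nhds (1 - 1 / q)) := tendsto_const_nhds.sub hlim
  have hφ : Tendsto (fun s => (g s / deriv g s) / s) atTop (nhds (1 - 1 / q)) :=
    tendsto_div_self_of_hasDerivAt hφd hD
  -- r s = s * g' s / g s is the pointwise inverse
  have hrid : (fun s => s * deriv g s / g s) = fun s => ((g s / deriv g s) / s)⁻¹ := by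
    funext s
    rw [inv_div, div_div_eq_mul_div]
  -- derivative of ψ t = log (g (exp t))
  have hψd : ∀ᶠ t in atTop, HasDerivAt (fun u => Real.log (g (Real.exp u)))
      (Real.exp t * deriv g (Real.exp t) / g (Real.exp t)) t := by
    filter_upwards [Real.tendsto_exp_atTop.eventually_ge_atTop a] with t ht
    have hmem : Real.exp t ∈ Ioi s₀ := hIci ht
    have h1 : HasDerivAt (fun u => g (Real.exp u)) (deriv g (Real.exp t) * Real.exp t) t :=
      (hg1 _ hmem).comp t (Real.hasDerivAt_exp t)
    have h2 := h1.log (hgpos _ (mem_Ici.mpr (le_of_lt hmem))).ne'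
    convert h2 using 1
    ring
  -- composition identity for the final step
  have hfinid : ∀ᶠ s : ℝ in atTop,
      Real.log (g (Real.exp (Real.log s))) / Real.log s = Real.log (g s) / Real.log s := by
    filter_upwards [eventually_gt_atTop 0] with s hs
    rw [Real.exp_log hs]
  rcases eq_or_lt_of_le hq with hq1 | hq1
  · -- q = 1 : limit is 0
    have hr : Tendsto (fun s => s * deriv g s / g s) atTop atTop := by
      rw [hrid]
      apply Filter.Tendsto.inv_tendsto_nhdsGT_zero (f := fun s => (g s / deriv g s) / s)
      rw [tendsto_nhdsWithin_iff]
      constructor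
      · have : 1 - 1 / q = 0 := by rw [← hq1]; norm_num
        rwa [this] at hφ
      · filter_upwards [eventually_ge_atTop a, eventually_gt_atTop 0] with s hs hs0
        have hgs : 0 < g s := hgpos s (mem_Ici.mpr (le_of_lt (hIci hs)))
        have hgs' : 0 < deriv g s := hpos s hs
        exact mem_Ioi.mpr (by positivity)
    have hψ' : Tendsto (fun t => Real.exp t * deriv g (Real.exp t) / g (Real.exp t))
        atTop atTop := hr.comp Real.tendsto_exp_atTop
    have hψ : Tendsto (fun t => Real.log (g (Real.exp t)) / t) atTop atTop :=
      tendsto_div_self_atTop_of_hasDerivAt hψd hψ'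
    have h6 : Tendsto (fun s => Real.log (g s) / Real.log s) atTop atTop :=
      ((hψ.comp Real.tendsto_log_atTop).congr' hfinid)
    have h7 : Tendsto (fun s => (Real.log (g s) / Real.log s)⁻¹) atTop (nhds 0) :=
      h6.inv_tendsto_atTop
    have : 1 - 1 / q = 0 := by rw [← hq1]; norm_num
    rw [this]
    refine h7.congr fun s => ?_
    rw [inv_div]
  · -- q > 1
    set c : ℝ := 1 - 1 / q with hc
    have hcpos : 0 < c := by
      have : 1 / q < 1 := by rw [div_lt_one hq0]; exact hq1
      rw [hc]; linarith
    have hr : Tendsto (fun s => s * deriv g s / g s) atTop (nhds c⁻¹) := by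
      rw [hrid]
      exact hφ.inv₀ hcpos.ne'
    have hψ' : Tendsto (fun t => Real.exp t * deriv g (Real.exp t) / g (Real.exp t))
        atTop (nhds c⁻¹) := hr.comp Real.tendsto_exp_atTop
    have hψ : Tendsto (fun t => Real.log (g (Real.exp t)) / t) atTop (nhds c⁻¹) :=
      tendsto_div_self_of_hasDerivAt hψd hψ'
    have h6 : Tendsto (fun s => Real.log (g s) / Real.log s) atTop (nhds c⁻¹) :=
      ((hψ.comp Real.tendsto_log_atTop).congr' hfinid)
    have h7 : Tendsto (fun s => (Real.log (g s) / Real.log s)⁻¹) atTop (nhds c⁻¹⁻¹) :=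
      h6.inv₀ (inv_ne_zero hcpos.ne')
    rw [inv_inv] at h7
    refine h7.congr fun s => ?_
    rw [inv_div]
end

section
/- Assume g satisfies (G1) with limit 1/q. Then lim_{s→∞} (log g(s))/(log g'(s)) = q. -/
open Real Filter Set MeasureTheory

lemma aux_not_int (f : ℝ → ℝ) (T c : ℝ) (hc : 0 < c)
    (hb : ∀ s ∈ Ici T, c ≤ f s) : ¬ IntegrableOn f (Ici T) volume := by
  intro hi
  have h1 : IntegrableOn (fun _ : ℝ => c) (Ici T) volume := by
    refine Integrable.mono' hi aestronglyMeasurable_const ?_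
    filter_upwards [ae_restrict_mem measurableSet_Ici] with s hs
    rw [Real.norm_eq_abs, abs_of_pos hc]
    exact hb s hs
  rw [integrableOn_const_iff] at h1
  rcases h1 with h | h
  · exact hc.ne' (by simpa using h)
  · rw [Real.volume_Ici] at h
    simp at h

/-- Under (G1), (log g(s))/(log g'(s)) → q as s → ∞. -/
theorem stmt_4 (g : ℝ → ℝ) (s₀ q : ℝ) (hq : 1 ≤ q)
    (hC2 : ContDiffOn ℝ 2 g (Ici s₀))
    (hgpos : ∀ s ∈ Ici s₀, 0 < g s)
    (hint : ∀ᶠ s in atTop, IntegrableOn (fun u => 1 / g u) (Ici s))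
    (hlim : Tendsto (fun s => g s * deriv (deriv g) s / (deriv g s) ^ 2)
      atTop (nhds (1 / q))) :
    Tendsto (fun s => Real.log (g s) / Real.log (deriv g s)) atTop (nhds q) := by
  have hq0 : (0:ℝ) < q := lt_of_lt_of_le one_pos hq
  have hL : (0:ℝ) < 1 / q := by positivity
  -- derivative infrastructure on the open set Ioi s₀
  have hopen : IsOpen (Ioi s₀) := isOpen_Ioi
  have hC2' : ContDiffOn ℝ 2 g (Ioi s₀) := hC2.mono Ioi_subset_Ici_self
  have hdg : ∀ s ∈ Ioi s₀, HasDerivAt g (deriv g s) s := by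
    intro s hs
    exact ((hC2'.differentiableOn (by norm_num)).differentiableAt
      (hopen.mem_nhds hs)).hasDerivAt
  have hC1d : ContDiffOn ℝ 1 (deriv g) (Ioi s₀) :=
    hC2'.deriv_of_isOpen hopen (by norm_num)
  have hddg : ∀ s ∈ Ioi s₀, HasDerivAt (deriv g) (deriv (deriv g) s) s := by
    intro s hs
    exact ((hC1d.differentiableOn (by norm_num)).differentiableAt
      (hopen.mem_nhds hs)).hasDerivAt
  -- eventually H > 0, hence deriv g ≠ 0
  have hHpos : ∀ᶠ s in atTop, 0 < g s * deriv (deriv g) s / (deriv g s) ^ 2 :=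
    hlim.eventually (eventually_gt_nhds hL)
  have hne : ∀ᶠ s in atTop, deriv g s ≠ 0 := by
    filter_upwards [hHpos] with s hs h0
    rw [h0] at hs
    simp at hs
  -- choose T₁ with all the basic properties
  obtain ⟨T₀, hT₀⟩ := hint.exists
  obtain ⟨a, ha⟩ := eventually_atTop.mp ((eventually_gt_atTop s₀).and hne)
  set T₁ := max a (max (s₀ + 1) T₀) with hT₁def
  have hs₀T₁ : s₀ < T₁ := by
    have : s₀ + 1 ≤ T₁ := le_trans (le_max_left _ _) (le_max_right _ _)
    linarith
  have hT₁mem : ∀ s, T₁ ≤ s → s ∈ Ioi s₀ := fun s hs => lt_of_lt_of_le hs₀T₁ hs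
  have hT₁ne : ∀ s, T₁ ≤ s → deriv g s ≠ 0 := fun s hs =>
    (ha s (le_trans (le_max_left _ _) hs)).2
  have hT₁int : IntegrableOn (fun u => 1 / g u) (Ici T₁) volume :=
    hT₀.mono_set (Ici_subset_Ici.2 (le_trans (le_max_right _ _) (le_max_right _ _)))
  have hg0' : ∀ s, T₁ ≤ s → 0 < g s := fun s hs => hgpos s (mem_Ici.2 (le_of_lt (hT₁mem s hs)))
  have hcontg : ContinuousOn g (Ici T₁) := fun x hx =>
    ((hdg x (hT₁mem x hx)).continuousAt).continuousWithinAt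
  -- the derivative is positive on [T₁, ∞)
  have hd_pos : ∀ s, T₁ ≤ s → 0 < deriv g s := by
    by_contra hcon
    push_neg at hcon
    obtain ⟨b, hbT, hb0⟩ := hcon
    have hbneg : deriv g b < 0 := hb0.lt_of_ne (hT₁ne b hbT)
    have hneg : ∀ s, T₁ ≤ s → deriv g s < 0 := by
      intro s hsT
      rcases (hT₁ne s hsT).lt_or_gt with h | h
      · exact h
      exfalso
      have hsub : uIcc s b ⊆ Ici T₁ := by
        intro x hx
        exact le_trans (le_min hsT hbT) hx.1
      have hc : ContinuousOn (deriv g) (uIcc s b) := fun x hx =>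
        ((hddg x (hT₁mem x (hsub hx))).continuousAt).continuousWithinAt
      have h0mem : (0:ℝ) ∈ uIcc (deriv g s) (deriv g b) := by
        rw [mem_uIcc]
        right
        exact ⟨hbneg.le, h.le⟩
      obtain ⟨c, hc1, hc2⟩ := intermediate_value_uIcc hc h0mem
      exact hT₁ne c (hsub hc1) hc2
    have hant : AntitoneOn g (Ici T₁) := by
      refine antitoneOn_of_deriv_nonpos (convex_Ici T₁) hcontg ?_ ?_
      · intro x hx
        rw [interior_Ici] at hx
        exact ((hdg x (hT₁mem x hx.le)).differentiableAt).differentiableWithinAt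
      · intro x hx
        rw [interior_Ici] at hx
        exact (hneg x hx.le).le
    refine aux_not_int (fun u => 1 / g u) T₁ (1 / g T₁) (one_div_pos.2 (hg0' T₁ le_rfl)) ?_ hT₁int
    intro s hs
    exact one_div_le_one_div_of_le (hg0' s hs) (hant self_mem_Ici hs hs)
  -- g is monotone on [T₁,∞)
  have hmono : MonotoneOn g (Ici T₁) := by
    refine (strictMonoOn_of_deriv_pos (convex_Ici T₁) hcontg ?_).monotoneOn
    intro x hx
    rw [interior_Ici] at hx
    exact hd_pos x hx.le
  -- g → ∞
  have hgtop : Tendsto g atTop atTop := by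
    rw [tendsto_atTop]
    intro M
    have hex : ∃ s, T₁ ≤ s ∧ max M 1 < g s := by
      by_contra hcon
      push_neg at hcon
      refine aux_not_int (fun u => 1 / g u) T₁ (1 / max M 1)
        (by positivity) ?_ hT₁int
      intro s hs
      exact one_div_le_one_div_of_le (hg0' s hs) (hcon s hs)
    obtain ⟨s₂, hs₂T, hs₂⟩ := hex
    rw [eventually_atTop]
    refine ⟨s₂, fun u hu => ?_⟩
    calc M ≤ max M 1 := le_max_left _ _
      _ ≤ g s₂ := hs₂.le
      _ ≤ g u := hmono (mem_Ici.2 hs₂T) (mem_Ici.2 (hs₂T.trans hu)) hu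
  have hlogtop : Tendsto (fun s => Real.log (g s)) atTop atTop :=
    Real.tendsto_log_atTop.comp hgtop
  -- the key limit: log g' / log g → 1/q
  have hmain : Tendsto (fun s => Real.log (deriv g s) / Real.log (g s)) atTop (nhds (1 / q)) := by
    rw [Metric.tendsto_nhds]
    intro ε hε
    have hε3 : 0 < ε / 3 := by positivity
    have hevH : ∀ᶠ s in atTop,
        |g s * deriv (deriv g) s / (deriv g s) ^ 2 - 1 / q| < ε / 3 := by
      have := Metric.tendsto_nhds.mp hlim (ε / 3) hε3
      simpa [Real.dist_eq] using this
    obtain ⟨a', ha'⟩ := eventually_atTop.mp hevH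
    set T := max a' T₁ with hTdef
    have hTT₁ : T₁ ≤ T := le_max_right _ _
    have hmem : ∀ s, T ≤ s → s ∈ Ioi s₀ := fun s hs => hT₁mem s (hTT₁.trans hs)
    have hg0 : ∀ s, T ≤ s → 0 < g s := fun s hs => hg0' s (hTT₁.trans hs)
    have hd0 : ∀ s, T ≤ s → 0 < deriv g s := fun s hs => hd_pos s (hTT₁.trans hs)
    have hH : ∀ s, T ≤ s → |g s * deriv (deriv g) s / (deriv g s) ^ 2 - 1 / q| < ε / 3 :=
      fun s hs => ha' s ((le_max_left _ _).trans hs)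
    have hder : ∀ c : ℝ, ∀ s, T ≤ s →
        HasDerivAt (fun u => Real.log (deriv g u) - c * Real.log (g u))
          ((g s * deriv (deriv g) s / (deriv g s) ^ 2 - c) * (deriv g s / g s)) s := by
      intro c s hs
      have h1 : HasDerivAt (fun u => Real.log (deriv g u)) (deriv (deriv g) s / deriv g s) s :=
        (hddg s (hmem s hs)).log (ne_of_gt (hd0 s hs))
      have h2 : HasDerivAt (fun u => Real.log (g u)) (deriv g s / g s) s :=
        (hdg s (hmem s hs)).log (ne_of_gt (hg0 s hs))
      have h3 := h1.sub (h2.const_mul c)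
      refine h3.congr_deriv ?_
      have hgne : g s ≠ 0 := ne_of_gt (hg0 s hs)
      have hdne : deriv g s ≠ 0 := ne_of_gt (hd0 s hs)
      field_simp
    have hupper : AntitoneOn
        (fun u => Real.log (deriv g u) - (1 / q + ε / 3) * Real.log (g u)) (Ici T) := by
      refine antitoneOn_of_deriv_nonpos (convex_Ici T) ?_ ?_ ?_
      · intro x hx
        exact ((hder _ x hx).differentiableAt).continuousAt.continuousWithinAt
      · intro x hx
        rw [interior_Ici] at hx
        exact ((hder _ x hx.le).differentiableAt).differentiableWithinAt
      · intro x hx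
        rw [interior_Ici] at hx
        rw [(hder _ x hx.le).deriv]
        apply mul_nonpos_of_nonpos_of_nonneg
        · have h := hH x hx.le
          rw [abs_lt] at h
          linarith [h.2]
        · exact div_nonneg (hd0 x hx.le).le (hg0 x hx.le).le
    have hlower : MonotoneOn
        (fun u => Real.log (deriv g u) - (1 / q - ε / 3) * Real.log (g u)) (Ici T) := by
      refine monotoneOn_of_deriv_nonneg (convex_Ici T) ?_ ?_ ?_
      · intro x hx
        exact ((hder _ x hx).differentiableAt).continuousAt.continuousWithinAt
      · intro x hx
        rw [interior_Ici] at hx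
        exact ((hder _ x hx.le).differentiableAt).differentiableWithinAt
      · intro x hx
        rw [interior_Ici] at hx
        rw [(hder _ x hx.le).deriv]
        apply mul_nonneg _ (div_nonneg (hd0 x hx.le).le (hg0 x hx.le).le)
        have h := hH x hx.le
        rw [abs_lt] at h
        linarith [h.1]
    set C₁ := Real.log (deriv g T) - (1 / q + ε / 3) * Real.log (g T) with hC₁def
    set C₂ := Real.log (deriv g T) - (1 / q - ε / 3) * Real.log (g T) with hC₂def
    have hbig : ∀ᶠ s in atTop, (|C₁| + |C₂| + 1) / (ε / 3) < Real.log (g s) :=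
      hlogtop.eventually (eventually_gt_atTop _)
    filter_upwards [hbig, eventually_ge_atTop T] with s hbs hsT
    have hb0 : 0 < Real.log (g s) := lt_of_le_of_lt (by positivity) hbs
    have hup : Real.log (deriv g s) - (1 / q + ε / 3) * Real.log (g s) ≤ C₁ :=
      hupper self_mem_Ici (mem_Ici.2 hsT) hsT
    have hlo : C₂ ≤ Real.log (deriv g s) - (1 / q - ε / 3) * Real.log (g s) :=
      hlower self_mem_Ici (mem_Ici.2 hsT) hsT
    clear_value C₁ C₂
    have habs : |C₁| + |C₂| + 1 < ε / 3 * Real.log (g s) := by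
      rw [div_lt_iff₀ hε3] at hbs
      linarith [hbs]
    rw [Real.dist_eq, abs_lt]
    constructor
    · have hkey : (1 / q - ε) * Real.log (g s) < Real.log (deriv g s) := by
        nlinarith [neg_abs_le C₂, abs_nonneg C₁, abs_nonneg C₂,
          mul_pos hε3 hb0]
      have := (lt_div_iff₀ hb0).2 hkey
      linarith
    · have hkey : Real.log (deriv g s) < (1 / q + ε) * Real.log (g s) := by
        nlinarith [le_abs_self C₁, abs_nonneg C₁, abs_nonneg C₂,
          mul_pos hε3 hb0]
      have := (div_lt_iff₀ hb0).2 hkey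
      linarith
  -- conclude by taking inverses
  have hinv : Tendsto (fun s => (Real.log (deriv g s) / Real.log (g s))⁻¹)
      atTop (nhds (1 / q)⁻¹) := hmain.inv₀ (ne_of_gt hL)
  simpa [inv_div, one_div, inv_inv] using hinv
end

section
/- Under (G1)-(G2), the function F(s) := ∫_s^∞ dt/f(t) with f = e^g satisfies F(s) = (1/(f(s)g'(s)))·(1 - (1+o(1)) H(s)/g(s)) as s → ∞. In particular f'(s)·F(s) → 1. -/
open Real Filter Set MeasureTheory Topology

noncomputable def phiF (g : ℝ → ℝ) : ℝ → ℝ := fun t => deriv (deriv g) t / (deriv g t) ^ 2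

set_option maxHeartbeats 2000000 in
/-- Under (G1)-(G2), F(s) := ∫_s^∞ e^{-g(t)} dt satisfies
F(s) = (1/(e^{g(s)} g'(s)))·(1 - (1 + o(1))·H(s)/g(s)) as s → ∞; in
particular f'(s)F(s) = e^{g(s)} g'(s) F(s) → 1. -/
theorem stmt_10 (g : ℝ → ℝ) (s₀ q C : ℝ) (hq : 1 ≤ q) (hC : 0 < C)
    (hC3 : ContDiffOn ℝ 3 g (Ioi s₀))
    (hgpos : ∀ s ∈ Ioi s₀, 0 < g s)
    (hg' : ∀ s ∈ Ioi s₀, 0 < deriv g s)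
    (hintF : ∀ s ∈ Ioi s₀, IntegrableOn (fun t => Real.exp (-(g t))) (Ici s))
    (hlim : Tendsto (fun s => g s * deriv (deriv g) s / (deriv g s) ^ 2)
      atTop (nhds (1 / q)))
    (hH' : ∀ s ∈ Ioi s₀,
      |deriv (fun u => g u * deriv (deriv g) u / (deriv g u) ^ 2) s|
        ≤ C * (deriv g s / g s)) :
    (∃ e : ℝ → ℝ, Tendsto e atTop (nhds 0) ∧
      ∀ᶠ s in atTop,
        (∫ t in Ici s, Real.exp (-(g t))) =
          1 / (Real.exp (g s) * deriv g s) *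
            (1 - (1 + e s) *
              (g s * deriv (deriv g) s / (deriv g s) ^ 2) / g s)) ∧
    Tendsto (fun s => Real.exp (g s) * deriv g s * ∫ t in Ici s, Real.exp (-(g t)))
      atTop (nhds 1) := by
  have hq0 : (0:ℝ) < q := lt_of_lt_of_le one_pos hq
  have hopen : IsOpen (Ioi s₀) := isOpen_Ioi
  -- basic regularity
  have hgdiff : ∀ x ∈ Ioi s₀, HasDerivAt g (deriv g x) x := by
    intro x hx
    exact ((hC3.differentiableOn (by norm_num)).differentiableAt (hopen.mem_nhds hx)).hasDerivAt
  have hC2 : ContDiffOn ℝ 2 (deriv g) (Ioi s₀) := hC3.deriv_of_isOpen hopen (by norm_num)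
  have hC1 : ContDiffOn ℝ 1 (deriv (deriv g)) (Ioi s₀) := hC2.deriv_of_isOpen hopen (by norm_num)
  have hg'diff : ∀ x ∈ Ioi s₀, HasDerivAt (deriv g) (deriv (deriv g) x) x := fun x hx =>
    ((hC2.differentiableOn (by norm_num)).differentiableAt (hopen.mem_nhds hx)).hasDerivAt
  have hg''diff : ∀ x ∈ Ioi s₀, DifferentiableAt ℝ (deriv (deriv g)) x := fun x hx =>
    (hC1.differentiableOn (by norm_num)).differentiableAt (hopen.mem_nhds hx)
  have hgcont : ContinuousOn g (Ioi s₀) := hC3.continuousOn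
  have hg'cont : ContinuousOn (deriv g) (Ioi s₀) := hC2.continuousOn
  have hg''cont : ContinuousOn (deriv (deriv g)) (Ioi s₀) := hC1.continuousOn
  have hφcont : ContinuousOn (phiF g) (Ioi s₀) := by
    apply hg''cont.div (hg'cont.pow 2)
    exact fun x hx => pow_ne_zero 2 (ne_of_gt (hg' x hx))
  have hexpcont : ContinuousOn (fun t => Real.exp (-(g t))) (Ioi s₀) :=
    Real.continuous_exp.comp_continuousOn hgcont.neg
  -- monotonicity of g
  have hgmono : ∀ {s t : ℝ}, s₀ < s → s ≤ t → g s ≤ g t := by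
    intro s t hs hst
    have hmono : MonotoneOn g (Ioi s₀) := by
      apply monotoneOn_of_deriv_nonneg (convex_Ioi s₀) hgcont
      · rw [interior_Ioi]
        exact fun x hx => ((hgdiff x hx).differentiableAt).differentiableWithinAt
      · rw [interior_Ioi]; exact fun x hx => (hg' x hx).le
    exact hmono hs (hs.trans_le hst) hst
  -- g tends to infinity
  have hgtop : Tendsto g atTop atTop := by
    rw [tendsto_atTop]
    intro b
    have hub : ∃ x, s₀ < x ∧ b ≤ g x := by
      by_contra hcon
      push_neg at hcon
      have hint := hintF (s₀ + 1) (by simp)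
      have hconst : IntegrableOn (fun _ : ℝ => Real.exp (-b)) (Ici (s₀ + 1)) := by
        apply Integrable.mono hint aestronglyMeasurable_const
        apply (ae_restrict_iff' measurableSet_Ici).mpr (ae_of_all _ ?_)
        intro t ht
        have ht0 : s₀ < t := lt_of_lt_of_le (lt_add_one s₀) ht
        have := hcon t ht0
        rw [Real.norm_eq_abs, Real.norm_eq_abs, Real.abs_exp, Real.abs_exp]
        exact Real.exp_le_exp.mpr (by linarith)
      rcases (integrableOn_const_iff (C := Real.exp (-b))).mp hconst with h | h
      · exact Real.exp_ne_zero _ (enorm_eq_zero.mp h)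
      · rw [Real.volume_Ici] at h; exact lt_irrefl _ h
    obtain ⟨x, hx, hbx⟩ := hub
    filter_upwards [eventually_ge_atTop x] with t ht
    exact le_trans hbx (hgmono hx ht)
  -- eventual bounds on H
  have hHev : ∀ᶠ s in atTop, 1/(2*q) < g s * deriv (deriv g) s / (deriv g s) ^ 2 ∧
      g s * deriv (deriv g) s / (deriv g s) ^ 2 < 3/(2*q) := by
    have h1 : (1:ℝ)/(2*q) < 1/q := by
      apply one_div_lt_one_div_of_lt hq0; linarith
    have h2 : (1:ℝ)/q < 3/(2*q) := by
      rw [div_lt_div_iff₀ hq0 (by positivity)]; nlinarith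
    have hmem := hlim (Ioo_mem_nhds h1 h2)
    rw [mem_map] at hmem
    filter_upwards [hmem] with s hs
    exact ⟨hs.1, hs.2⟩
  obtain ⟨s₁, hs₁⟩ := eventually_atTop.mp
    (hHev.and ((hgtop.eventually_ge_atTop 1).and (eventually_gt_atTop s₀)))
  have hmem : ∀ s, s₁ ≤ s → s ∈ Ioi s₀ := fun s hs => (hs₁ s hs).2.2
  have hgs1 : ∀ s, s₁ ≤ s → 1 ≤ g s := fun s hs => (hs₁ s hs).2.1
  have hHlow : ∀ s, s₁ ≤ s → 1/(2*q) < g s * deriv (deriv g) s / (deriv g s) ^ 2 :=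
    fun s hs => (hs₁ s hs).1.1
  have hHhigh : ∀ s, s₁ ≤ s → g s * deriv (deriv g) s / (deriv g s) ^ 2 < 3/(2*q) :=
    fun s hs => (hs₁ s hs).1.2
  have hs₁mem : s₁ ∈ Ioi s₀ := hmem s₁ le_rfl
  have hIcisub : Ici s₁ ⊆ Ioi s₀ := fun x hx => show s₀ < x from lt_of_lt_of_le hs₁mem hx
  have hIoisub : ∀ s, s₁ ≤ s → Ioi s ⊆ Ioi s₀ := fun s hs x hx =>
    show s₀ < x from lt_trans (lt_of_lt_of_le hs₁mem hs) hx
  have hHphi : ∀ s, g s * deriv (deriv g) s / (deriv g s) ^ 2 = g s * phiF g s := by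
    intro s; simp only [phiF]; ring
  -- positivity of phi
  have hφpos : ∀ s, s₁ ≤ s → 0 < phiF g s := by
    intro s hs
    have h := lt_trans (by positivity : (0:ℝ) < 1/(2*q)) (hHlow s hs)
    rw [hHphi] at h
    have hg0 := hgpos s (hmem s hs)
    rcases mul_pos_iff.mp h with ⟨_, h2⟩ | ⟨h1, _⟩
    · exact h2
    · linarith
  have hφub : ∀ s, s₁ ≤ s → phiF g s ≤ 3/(2*q) / g s := by
    intro s hs
    have h := (hHhigh s hs).le
    rw [hHphi] at h
    have hg0 := hgpos s (hmem s hs)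
    rw [le_div_iff₀ hg0]
    nlinarith
  have hφub' : ∀ s, s₁ ≤ s → phiF g s ≤ 3/(2*q) := by
    intro s hs
    exact le_trans (hφub s hs) (div_le_self (by positivity) (hgs1 s hs))
  have hg''pos : ∀ s, s₁ ≤ s → 0 < deriv (deriv g) s := by
    intro s hs
    have h := hφpos s hs
    simp only [phiF] at h
    rcases div_pos_iff.mp h with ⟨h1, _⟩ | ⟨_, h2⟩
    · exact h1
    · exact absurd h2 (not_lt.mpr (by positivity))
  -- g' monotone, lower bound δ
  have hg'mono : MonotoneOn (deriv g) (Ici s₁) := by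
    apply monotoneOn_of_deriv_nonneg (convex_Ici s₁) (hg'cont.mono hIcisub)
    · rw [interior_Ici]
      exact fun x hx => ((hg'diff x (hIcisub (mem_Ici.mpr hx.le))).differentiableAt).differentiableWithinAt
    · rw [interior_Ici]; exact fun x hx => (hg''pos x hx.le).le
  set δ := deriv g s₁ with hδdef
  have hδ : 0 < δ := hg' s₁ hs₁mem
  have hg'lb : ∀ t, s₁ ≤ t → δ ≤ deriv g t := fun t ht =>
    hg'mono self_mem_Ici (mem_Ici.mpr ht) ht
  -- linear growth of g
  have hglin : ∀ s, s₁ ≤ s → ∀ t, s ≤ t → g s + δ * (t - s) ≤ g t := by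
    intro s hs t hst
    have hmono : MonotoneOn (fun u => g u - δ * u) (Ici s₁) := by
      apply monotoneOn_of_deriv_nonneg (convex_Ici s₁)
      · exact (hgcont.mono hIcisub).sub (continuous_const.mul continuous_id).continuousOn
      · rw [interior_Ici]; intro x hx
        exact (((hgdiff x (hIcisub (mem_Ici.mpr hx.le))).sub
          ((hasDerivAt_id x).const_mul δ)).differentiableAt).differentiableWithinAt
      · rw [interior_Ici]; intro x hx
        have h0 : HasDerivAt (fun u : ℝ => δ * u) δ x := by
          simpa using (hasDerivAt_id x).const_mul δ
        have hd := ((hgdiff x (hIcisub (mem_Ici.mpr hx.le))).sub h0).deriv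
        rw [show deriv (fun u => g u - δ * u) x = deriv g x - δ from hd]
        have := hg'lb x hx.le
        linarith
    have := hmono (mem_Ici.mpr hs) (mem_Ici.mpr (hs.trans hst)) hst
    simp only at this
    linarith
  -- basic integrability
  have hintIoi : ∀ s, s₁ ≤ s → IntegrableOn (fun t => Real.exp (-(g t))) (Ioi s) :=
    fun s hs => (hintF s (hmem s hs)).mono_set Ioi_subset_Ici_self
  have hintR : ∀ s, s₁ ≤ s → IntegrableOn (fun t => Real.exp (-(g t)) * phiF g t) (Ioi s) := by
    intro s hs
    apply Integrable.mono' ((hintIoi s hs).const_mul (3/(2*q)))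
    · exact ((hexpcont.mono (hIoisub s hs)).mul
        (hφcont.mono (hIoisub s hs))).aestronglyMeasurable measurableSet_Ioi
    · apply (ae_restrict_iff' measurableSet_Ioi).mpr (ae_of_all _ ?_)
      intro t ht
      have hts : s₁ ≤ t := hs.trans ht.le
      rw [Real.norm_eq_abs, abs_mul, abs_of_nonneg (Real.exp_nonneg _),
        abs_of_nonneg (hφpos t hts).le]
      calc Real.exp (-(g t)) * phiF g t ≤ Real.exp (-(g t)) * (3/(2*q)) :=
            mul_le_mul_of_nonneg_left (hφub' t hts) (Real.exp_nonneg _)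
        _ = 3/(2*q) * Real.exp (-(g t)) := mul_comm _ _
  -- integration by parts 1
  have hIBP1 : ∀ s, s₁ ≤ s →
      (∫ t in Ici s, Real.exp (-(g t))) =
        Real.exp (-(g s)) / deriv g s - ∫ t in Ioi s, Real.exp (-(g t)) * phiF g t := by
    intro s hs
    have hsub := hIoisub s hs
    have hsmem := hmem s hs
    have hder : ∀ x ∈ Ioi s, HasDerivAt (fun t => -(Real.exp (-(g t)) / deriv g t))
        (Real.exp (-(g x)) * (1 + phiF g x)) x := by
      intro x hx
      have hxm : x ∈ Ioi s₀ := hsub hx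
      have h1 : HasDerivAt (fun t => Real.exp (-(g t)))
          (Real.exp (-(g x)) * (-(deriv g x))) x := ((hgdiff x hxm).neg).exp
      have h2 := (h1.div (hg'diff x hxm) (ne_of_gt (hg' x hxm))).neg
      refine h2.congr_deriv ?_
      simp only [phiF]
      have hgx := ne_of_gt (hg' x hxm)
      field_simp
      ring
    have hcw : ContinuousWithinAt (fun t => -(Real.exp (-(g t)) / deriv g t)) (Ici s) s := by
      have hco : ContinuousOn (fun t => -(Real.exp (-(g t)) / deriv g t)) (Ioi s₀) :=
        ((hexpcont.div hg'cont (fun x hx => ne_of_gt (hg' x hx)))).neg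
      exact (hco.continuousAt (hopen.mem_nhds hsmem)).continuousWithinAt
    have hf'int : IntegrableOn (fun t => Real.exp (-(g t)) * (1 + phiF g t)) (Ioi s) := by
      have heq : (fun t => Real.exp (-(g t)) * (1 + phiF g t)) =
          fun t => Real.exp (-(g t)) + Real.exp (-(g t)) * phiF g t := by
        funext t; ring
      rw [heq]; exact (hintIoi s hs).add (hintR s hs)
    have hlim0 : Tendsto (fun t => -(Real.exp (-(g t)) / deriv g t)) atTop (𝓝 0) := by
      apply squeeze_zero_norm' (a := fun t => Real.exp (-(g t)) / δ)
      · filter_upwards [eventually_ge_atTop s₁] with t ht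
        have h1 := hg'lb t ht
        rw [norm_neg, Real.norm_eq_abs, abs_div, Real.abs_exp,
          abs_of_pos (lt_of_lt_of_le hδ h1)]
        exact div_le_div_of_nonneg_left (Real.exp_nonneg _) hδ h1
      · have h := tendsto_exp_neg_atTop_nhds_zero.comp hgtop
        simpa using h.div_const δ
    have hIBP := integral_Ioi_of_hasDerivAt_of_tendsto hcw hder hf'int hlim0
    rw [integral_Ici_eq_integral_Ioi]
    have hsplit : (∫ t in Ioi s, Real.exp (-(g t))) =
        (∫ t in Ioi s, Real.exp (-(g t)) * (1 + phiF g t)) -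
          ∫ t in Ioi s, Real.exp (-(g t)) * phiF g t := by
      rw [← integral_sub hf'int (hintR s hs)]
      congr 1
      funext t
      ring
    rw [hsplit, hIBP]
    ring
  -- nonnegativity and upper bound of R
  have hRnonneg : ∀ s, s₁ ≤ s → 0 ≤ ∫ t in Ioi s, Real.exp (-(g t)) * phiF g t := by
    intro s hs
    apply setIntegral_nonneg measurableSet_Ioi
    intro t ht
    exact mul_nonneg (Real.exp_nonneg _) (hφpos t (hs.trans ht.le)).le
  have hRub : ∀ s, s₁ ≤ s → (∫ t in Ioi s, Real.exp (-(g t)) * phiF g t) ≤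
      3/(2*q) / g s * ∫ t in Ici s, Real.exp (-(g t)) := by
    intro s hs
    rw [integral_Ici_eq_integral_Ioi, ← integral_const_mul]
    apply setIntegral_mono_on (hintR s hs) ((hintIoi s hs).const_mul _) measurableSet_Ioi
    intro t ht
    have hts : s₁ ≤ t := hs.trans ht.le
    have h1 : phiF g t ≤ 3/(2*q) / g t := hφub t hts
    have h2 : 3/(2*q) / g t ≤ 3/(2*q) / g s :=
      div_le_div_of_nonneg_left (by positivity) (hgpos s (hmem s hs)) (hgmono (hmem s hs) ht.le)
    calc Real.exp (-(g t)) * phiF g t ≤ Real.exp (-(g t)) * (3/(2*q) / g s) :=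
          mul_le_mul_of_nonneg_left (h1.trans h2) (Real.exp_nonneg _)
      _ = 3/(2*q) / g s * Real.exp (-(g t)) := mul_comm _ _
  -- P bounds
  have hPle : ∀ s, s₁ ≤ s →
      Real.exp (g s) * deriv g s * (∫ t in Ici s, Real.exp (-(g t))) ≤ 1 ∧
      1 - 3/(2*q) / g s ≤ Real.exp (g s) * deriv g s * ∫ t in Ici s, Real.exp (-(g t)) := by
    intro s hs
    have hkey := hIBP1 s hs
    have hg's := hg' s (hmem s hs)
    have hRn := hRnonneg s hs
    have hRu := hRub s hs
    have hPeq : Real.exp (g s) * deriv g s * (∫ t in Ici s, Real.exp (-(g t))) =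
        1 - Real.exp (g s) * deriv g s * ∫ t in Ioi s, Real.exp (-(g t)) * phiF g t := by
      rw [hkey, mul_sub]
      congr 1
      rw [Real.exp_neg]
      field_simp
    have hfg' : 0 < Real.exp (g s) * deriv g s := mul_pos (Real.exp_pos _) hg's
    have hub : Real.exp (g s) * deriv g s * (∫ t in Ici s, Real.exp (-(g t))) ≤ 1 := by
      rw [hPeq]
      nlinarith
    refine ⟨hub, ?_⟩
    rw [hPeq]
    have hMg : (0:ℝ) ≤ 3/(2*q) / g s := by
      have := hgpos s (hmem s hs); positivity
    have h3 : Real.exp (g s) * deriv g s * (∫ t in Ioi s, Real.exp (-(g t)) * phiF g t) ≤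
        3/(2*q)/g s * (Real.exp (g s) * deriv g s * ∫ t in Ici s, Real.exp (-(g t))) := by
      calc Real.exp (g s) * deriv g s * (∫ t in Ioi s, Real.exp (-(g t)) * phiF g t) ≤
            Real.exp (g s) * deriv g s * (3/(2*q) / g s * ∫ t in Ici s, Real.exp (-(g t))) :=
          mul_le_mul_of_nonneg_left hRu hfg'.le
        _ = 3/(2*q)/g s * (Real.exp (g s) * deriv g s * ∫ t in Ici s, Real.exp (-(g t))) := by
          ring
    nlinarith
  -- part 2 : P → 1
  have hP1 : Tendsto (fun s => Real.exp (g s) * deriv g s * ∫ t in Ici s, Real.exp (-(g t)))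
      atTop (𝓝 1) := by
    have hlow : Tendsto (fun s => 1 - 3/(2*q) / g s) atTop (𝓝 1) := by
      have h0 : Tendsto (fun s => 3/(2*q) / g s) atTop (𝓝 0) :=
        Tendsto.div_atTop tendsto_const_nhds hgtop
      have := (tendsto_const_nhds (x := (1:ℝ)) (f := atTop)).sub h0
      simpa using this
    apply tendsto_of_tendsto_of_tendsto_of_le_of_le' hlow tendsto_const_nhds
    · filter_upwards [eventually_ge_atTop s₁] with s hs; exact (hPle s hs).2
    · filter_upwards [eventually_ge_atTop s₁] with s hs; exact (hPle s hs).1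
  -- elementary inequality x e^{-x} ≤ 2 e^{-x/2}
  have hxexp : ∀ x : ℝ, 0 ≤ x → x * Real.exp (-x) ≤ 2 * Real.exp (-(x/2)) := by
    intro x hx
    have h1 : x / 2 ≤ Real.exp (x/2) := by
      have := Real.add_one_le_exp (x/2); linarith
    calc x * Real.exp (-x) ≤ 2 * Real.exp (x/2) * Real.exp (-x) :=
          mul_le_mul_of_nonneg_right (by linarith) (Real.exp_nonneg _)
      _ = 2 * Real.exp (-(x/2)) := by
        rw [mul_assoc, ← Real.exp_add]
        congr 2
        ring
  -- integrability of the J integrand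
  have hJptbd : ∀ s, s₁ ≤ s → ∀ t, t ∈ Ioi s →
      Real.exp (-(g t)) * (g t - g s) ≤
        2 * Real.exp (-(g s)) * Real.exp (δ/2 * s) * Real.exp (-(δ/2) * t) := by
    intro s hs t ht
    have hst : s ≤ t := ht.le
    have hgx : 0 ≤ g t - g s := by
      have := hgmono (hmem s hs) hst; linarith
    have h1 : Real.exp (-(g t)) = Real.exp (-(g s)) * Real.exp (-(g t - g s)) := by
      rw [← Real.exp_add]; congr 1; ring
    have h2 := hxexp (g t - g s) hgx
    have h3 : Real.exp (-((g t - g s)/2)) ≤ Real.exp (-(δ * (t - s) / 2)) := by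
      apply Real.exp_le_exp.mpr
      have := hglin s hs t hst
      linarith
    calc Real.exp (-(g t)) * (g t - g s)
        = Real.exp (-(g s)) * ((g t - g s) * Real.exp (-(g t - g s))) := by rw [h1]; ring
      _ ≤ Real.exp (-(g s)) * (2 * Real.exp (-((g t - g s)/2))) :=
          mul_le_mul_of_nonneg_left h2 (Real.exp_nonneg _)
      _ ≤ Real.exp (-(g s)) * (2 * Real.exp (-(δ * (t - s) / 2))) :=
          mul_le_mul_of_nonneg_left (by nlinarith [Real.exp_nonneg (-(δ * (t - s)/2))]) (Real.exp_nonneg _)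
      _ = 2 * Real.exp (-(g s)) * Real.exp (δ/2 * s) * Real.exp (-(δ/2) * t) := by
          rw [mul_assoc (2 * Real.exp (-(g s))), ← Real.exp_add]
          ring_nf
  have hintJ : ∀ s, s₁ ≤ s →
      IntegrableOn (fun t => Real.exp (-(g t)) * (g t - g s)) (Ioi s) := by
    intro s hs
    apply Integrable.mono'
      (g := fun t => 2 * Real.exp (-(g s)) * Real.exp (δ/2 * s) * Real.exp (-(δ/2) * t))
      (((exp_neg_integrableOn_Ioi s (by positivity : (0:ℝ) < δ/2)).const_mul
        (2 * Real.exp (-(g s)) * Real.exp (δ/2 * s))))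
    · exact ((hexpcont.mono (hIoisub s hs)).mul
        (((hgcont.mono (hIoisub s hs))).sub continuousOn_const)).aestronglyMeasurable
        measurableSet_Ioi
    · apply (ae_restrict_iff' measurableSet_Ioi).mpr (ae_of_all _ ?_)
      intro t ht
      have hgx : 0 ≤ g t - g s := by
        have := hgmono (hmem s hs) ht.le; linarith
      rw [Real.norm_eq_abs, abs_mul, Real.abs_exp, abs_of_nonneg hgx]
      exact hJptbd s hs t ht
  -- J bound via integration by parts
  have hJbound : ∀ s, s₁ ≤ s →
      (∫ t in Ioi s, Real.exp (-(g t)) * (g t - g s)) ≤ Real.exp (-(g s)) / deriv g s := by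
    intro s hs
    have hsub := hIoisub s hs
    have hsmem := hmem s hs
    have hVder : ∀ x ∈ Ioi s, HasDerivAt
        (fun t => -((g t - g s + 1) * (Real.exp (-(g t)) / deriv g t)))
        (Real.exp (-(g x)) * (g x - g s) +
          (g x - g s + 1) * (Real.exp (-(g x)) * phiF g x)) x := by
      intro x hx
      have hxm : x ∈ Ioi s₀ := hsub hx
      have hu : HasDerivAt (fun t => g t - g s + 1) (deriv g x) x :=
        ((hgdiff x hxm).sub_const (g s)).add_const 1
      have h1 : HasDerivAt (fun t => Real.exp (-(g t)))
          (Real.exp (-(g x)) * (-(deriv g x))) x := ((hgdiff x hxm).neg).exp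
      have hw := h1.div (hg'diff x hxm) (ne_of_gt (hg' x hxm))
      have h2 := (hu.mul hw).neg
      refine h2.congr_deriv ?_
      simp only [phiF, Pi.div_apply]
      have hgx := ne_of_gt (hg' x hxm)
      field_simp
      ring
    have hVcont : ContinuousWithinAt
        (fun t => -((g t - g s + 1) * (Real.exp (-(g t)) / deriv g t))) (Ici s) s := by
      have hco : ContinuousOn
          (fun t => -((g t - g s + 1) * (Real.exp (-(g t)) / deriv g t))) (Ioi s₀) :=
        (((hgcont.sub continuousOn_const).add continuousOn_const).mul
          (hexpcont.div hg'cont (fun x hx => ne_of_gt (hg' x hx)))).neg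
      exact (hco.continuousAt (hopen.mem_nhds hsmem)).continuousWithinAt
    have hint2 : IntegrableOn
        (fun t => (g t - g s + 1) * (Real.exp (-(g t)) * phiF g t)) (Ioi s) := by
      apply Integrable.mono'
        (g := fun t => 3/(2*q) * (Real.exp (-(g t)) * (g t - g s)) + 3/(2*q) * Real.exp (-(g t)))
        (((hintJ s hs).const_mul _).add ((hintIoi s hs).const_mul _))
      · exact ((((hgcont.mono hsub).sub continuousOn_const).add continuousOn_const).mul
          ((hexpcont.mono hsub).mul (hφcont.mono hsub))).aestronglyMeasurable measurableSet_Ioi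
      · apply (ae_restrict_iff' measurableSet_Ioi).mpr (ae_of_all _ ?_)
        intro t ht
        have hts : s₁ ≤ t := hs.trans ht.le
        have hgx : 0 ≤ g t - g s := by
          have := hgmono (hmem s hs) ht.le; linarith
        have hφt := hφpos t hts
        have hφM := hφub' t hts
        have he := Real.exp_nonneg (-(g t))
        rw [Real.norm_eq_abs, abs_mul, abs_mul, Real.abs_exp,
          abs_of_nonneg (by linarith : (0:ℝ) ≤ g t - g s + 1), abs_of_nonneg hφt.le]
        nlinarith [mul_le_mul_of_nonneg_left hφM (mul_nonneg he hgx),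
          mul_le_mul_of_nonneg_left hφM he]
    have hintV' : IntegrableOn (fun x => Real.exp (-(g x)) * (g x - g s) +
        (g x - g s + 1) * (Real.exp (-(g x)) * phiF g x)) (Ioi s) :=
      (hintJ s hs).add hint2
    have hVlim : Tendsto (fun t => -((g t - g s + 1) * (Real.exp (-(g t)) / deriv g t)))
        atTop (𝓝 0) := by
      apply squeeze_zero_norm' (a := fun t => (g t * Real.exp (-(g t)) + Real.exp (-(g t))) * (1/δ))
      · filter_upwards [eventually_ge_atTop (max s₁ s)] with t ht
        have hts₁ : s₁ ≤ t := le_trans (le_max_left _ _) ht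
        have hts : s ≤ t := le_trans (le_max_right _ _) ht
        have hgx : 0 ≤ g t - g s := by
          have := hgmono (hmem s hs) hts; linarith
        have hgs0 := hgpos s (hmem s hs)
        have hg't := hg' t (hmem t hts₁)
        have hlb := hg'lb t hts₁
        rw [norm_neg, Real.norm_eq_abs, abs_mul, abs_div, Real.abs_exp,
          abs_of_nonneg (by linarith : (0:ℝ) ≤ g t - g s + 1), abs_of_pos hg't]
        have h1 : Real.exp (-(g t)) / deriv g t ≤ Real.exp (-(g t)) / δ :=
          div_le_div_of_nonneg_left (Real.exp_nonneg _) hδ hlb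
        have h2 : g t - g s + 1 ≤ g t + 1 := by linarith
        have h3 : (0:ℝ) ≤ Real.exp (-(g t)) / deriv g t := by positivity
        calc (g t - g s + 1) * (Real.exp (-(g t)) / deriv g t)
            ≤ (g t + 1) * (Real.exp (-(g t)) / δ) := by
              apply mul_le_mul h2 h1 h3 (by nlinarith [hgs1 t hts₁])
          _ = (g t * Real.exp (-(g t)) + Real.exp (-(g t))) * (1/δ) := by ring
      · have hbase : Tendsto (fun x : ℝ => (x * Real.exp (-x) + Real.exp (-x)) * (1/δ))
            atTop (𝓝 0) := by
          have h1 := tendsto_pow_mul_exp_neg_atTop_nhds_zero 1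
          simp only [pow_one] at h1
          have h2 := (h1.add tendsto_exp_neg_atTop_nhds_zero).mul_const (1/δ)
          simpa using h2
        have := hbase.comp hgtop
        simpa [Function.comp_def] using this
    have hIBP2 := integral_Ioi_of_hasDerivAt_of_tendsto hVcont hVder hintV' hVlim
    have hle : (∫ t in Ioi s, Real.exp (-(g t)) * (g t - g s)) ≤
        ∫ x in Ioi s, (Real.exp (-(g x)) * (g x - g s) +
          (g x - g s + 1) * (Real.exp (-(g x)) * phiF g x)) := by
      apply setIntegral_mono_on (hintJ s hs) hintV' measurableSet_Ioi
      intro t ht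
      have hts : s₁ ≤ t := hs.trans ht.le
      have hgx : 0 ≤ g t - g s := by
        have := hgmono (hmem s hs) ht.le; linarith
      have hφt := hφpos t hts
      have he := Real.exp_nonneg (-(g t))
      have hnn : (0:ℝ) ≤ (g t - g s + 1) * (Real.exp (-(g t)) * phiF g t) :=
        mul_nonneg (by linarith) (mul_nonneg he hφt.le)
      linarith
    rw [hIBP2] at hle
    simpa using hle
  -- derivative of phi
  have hφhas : ∀ u ∈ Ioi s₀, HasDerivAt (phiF g)
      (deriv (fun v => g v * deriv (deriv g) v / (deriv g v) ^ 2) u * (g u)⁻¹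
        + (g u * deriv (deriv g) u / (deriv g u) ^ 2) * (-(deriv g u) / (g u) ^ 2)) u := by
    intro u hu
    have hgu := hgpos u hu
    have hg'u := hg' u hu
    have hHdiff : HasDerivAt (fun v => g v * deriv (deriv g) v / (deriv g v) ^ 2)
        (deriv (fun v => g v * deriv (deriv g) v / (deriv g v) ^ 2) u) u := by
      have hdiff : DifferentiableAt ℝ (fun v => g v * deriv (deriv g) v / (deriv g v) ^ 2) u := by
        apply DifferentiableAt.div
        · exact ((hgdiff u hu).differentiableAt).mul (hg''diff u hu)
        · exact ((hg'diff u hu).differentiableAt).pow 2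
        · exact pow_ne_zero 2 (ne_of_gt hg'u)
      exact hdiff.hasDerivAt
    have hinv : HasDerivAt (fun v => (g v)⁻¹) (-(deriv g u) / (g u) ^ 2) u :=
      (hgdiff u hu).inv (ne_of_gt hgu)
    have hmul := hHdiff.mul hinv
    apply hmul.congr_of_eventuallyEq
    apply eventually_of_mem (hopen.mem_nhds hu)
    intro v hv
    have h1 := ne_of_gt (hgpos v hv)
    have h2 := ne_of_gt (hg' v hv)
    simp only [phiF, Pi.mul_apply]
    field_simp
  have hφbd : ∀ u, s₁ ≤ u → |deriv (phiF g) u| ≤ (C + 3/(2*q)) * (deriv g u / (g u) ^ 2) := by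
    intro u hu
    have hum := hmem u hu
    have hgu := hgpos u hum
    have hg'u := hg' u hum
    rw [(hφhas u hum).deriv]
    have h1 := hH' u hum
    have hH2 : |g u * deriv (deriv g) u / (deriv g u) ^ 2| ≤ 3/(2*q) := by
      rw [abs_of_pos (lt_trans (by positivity) (hHlow u hu))]
      exact (hHhigh u hu).le
    have e1 : |deriv (fun v => g v * deriv (deriv g) v / (deriv g v) ^ 2) u * (g u)⁻¹|
        ≤ C * (deriv g u / g u) * (g u)⁻¹ := by
      rw [abs_mul, abs_inv, abs_of_pos hgu]
      exact mul_le_mul_of_nonneg_right h1 (by positivity)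
    have e2 : |(g u * deriv (deriv g) u / (deriv g u) ^ 2) * (-(deriv g u) / (g u) ^ 2)|
        ≤ 3/(2*q) * (deriv g u / (g u) ^ 2) := by
      rw [abs_mul]
      have h4 : |(-(deriv g u) / (g u) ^ 2)| = deriv g u / (g u) ^ 2 := by
        rw [abs_div, abs_neg, abs_of_pos hg'u, abs_of_pos (show (0:ℝ) < (g u)^2 by positivity)]
      rw [h4]
      exact mul_le_mul_of_nonneg_right hH2 (by positivity)
    have e3 : C * (deriv g u / g u) * (g u)⁻¹ = C * (deriv g u / (g u) ^ 2) := by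
      field_simp
    calc |deriv (fun v => g v * deriv (deriv g) v / (deriv g v) ^ 2) u * (g u)⁻¹
          + (g u * deriv (deriv g) u / (deriv g u) ^ 2) * (-(deriv g u) / (g u) ^ 2)|
        ≤ |deriv (fun v => g v * deriv (deriv g) v / (deriv g v) ^ 2) u * (g u)⁻¹|
          + |(g u * deriv (deriv g) u / (deriv g u) ^ 2) * (-(deriv g u) / (g u) ^ 2)| :=
          abs_add_le _ _
      _ ≤ C * (deriv g u / g u) * (g u)⁻¹ + 3/(2*q) * (deriv g u / (g u) ^ 2) := by
          linarith
      _ = (C + 3/(2*q)) * (deriv g u / (g u) ^ 2) := by rw [e3]; ring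
  -- Lipschitz-type bound for phi
  have hφlip : ∀ s, s₁ ≤ s → ∀ t, s ≤ t →
      |phiF g t - phiF g s| ≤ (C + 3/(2*q)) / (g s) ^ 2 * (g t - g s) := by
    intro s hs t hst
    have hgs := hgpos s (hmem s hs)
    have hmono : ∀ σ : ℝ, |σ| ≤ 1 →
        MonotoneOn (fun u => (C + 3/(2*q)) / (g s) ^ 2 * g u + σ * phiF g u) (Ici s) := by
      intro σ hσ
      have hIci : Ici s ⊆ Ioi s₀ := fun x hx => show s₀ < x from lt_of_lt_of_le (hmem s hs) hx
      apply monotoneOn_of_deriv_nonneg (convex_Ici s)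
      · exact (continuousOn_const.mul (hgcont.mono hIci)).add
          (continuousOn_const.mul (hφcont.mono hIci))
      · rw [interior_Ici]
        intro x hx
        have hxm : x ∈ Ioi s₀ := hIci (mem_Ici.mpr hx.le)
        exact ((((hgdiff x hxm).const_mul _).add
          (((hφhas x hxm).differentiableAt.hasDerivAt).const_mul σ)).differentiableAt).differentiableWithinAt
      · rw [interior_Ici]
        intro x hx
        have hxs₁ : s₁ ≤ x := hs.trans hx.le
        have hxm : x ∈ Ioi s₀ := hmem x hxs₁
        have hd := (((hgdiff x hxm).const_mul ((C + 3/(2*q)) / (g s) ^ 2)).add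
          (((hφhas x hxm).differentiableAt.hasDerivAt).const_mul σ)).deriv
        rw [show deriv (fun u => (C + 3/(2*q)) / (g s) ^ 2 * g u + σ * phiF g u) x
          = (C + 3/(2*q)) / (g s) ^ 2 * deriv g x + σ * deriv (phiF g) x from hd]
        have hb := hφbd x hxs₁
        have hgsx : g s ≤ g x := hgmono (hmem s hs) hx.le
        have hgx := hgpos x hxm
        have h9 : deriv g x / (g x) ^ 2 ≤ deriv g x / (g s) ^ 2 :=
          div_le_div_of_nonneg_left (hg' x hxm).le (by positivity) (by nlinarith)
        have h10 : σ * deriv (phiF g) x ≥ -((C + 3/(2*q)) * (deriv g x / (g s) ^ 2)) := by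
          have habs : |σ * deriv (phiF g) x| ≤ (C + 3/(2*q)) * (deriv g x / (g s) ^ 2) := by
            rw [abs_mul]
            calc |σ| * |deriv (phiF g) x| ≤ 1 * ((C + 3/(2*q)) * (deriv g x / (g x) ^ 2)) :=
                  mul_le_mul hσ hb (abs_nonneg _) zero_le_one
              _ = (C + 3/(2*q)) * (deriv g x / (g x) ^ 2) := one_mul _
              _ ≤ (C + 3/(2*q)) * (deriv g x / (g s) ^ 2) :=
                  mul_le_mul_of_nonneg_left h9 (by positivity)
          linarith [neg_abs_le (σ * deriv (phiF g) x)]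
        have : (C + 3/(2*q)) / (g s) ^ 2 * deriv g x
            = (C + 3/(2*q)) * (deriv g x / (g s) ^ 2) := by ring
        linarith
    have k1 := hmono 1 (by norm_num) (self_mem_Ici) (mem_Ici.mpr hst) hst
    have k2 := hmono (-1) (by norm_num) (self_mem_Ici) (mem_Ici.mpr hst) hst
    simp only [one_mul, neg_one_mul] at k1 k2
    rw [abs_sub_le_iff]
    constructor <;> linarith
  -- the error bound
  have herr : ∀ s, s₁ ≤ s →
      |(∫ t in Ioi s, Real.exp (-(g t)) * phiF g t) -
        phiF g s * ∫ t in Ici s, Real.exp (-(g t))|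
        ≤ (C + 3/(2*q)) / (g s) ^ 2 * (Real.exp (-(g s)) / deriv g s) := by
    intro s hs
    have hgs := hgpos s (hmem s hs)
    have hA : phiF g s * (∫ t in Ici s, Real.exp (-(g t))) =
        ∫ t in Ioi s, phiF g s * Real.exp (-(g t)) := by
      rw [integral_Ici_eq_integral_Ioi, integral_const_mul]
    rw [hA, ← integral_sub (hintR s hs) ((hintIoi s hs).const_mul _)]
    have h1 : |∫ t in Ioi s, (Real.exp (-(g t)) * phiF g t - phiF g s * Real.exp (-(g t)))|
        ≤ ∫ t in Ioi s, (C + 3/(2*q)) / (g s) ^ 2 * (Real.exp (-(g t)) * (g t - g s)) := by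
      calc |∫ t in Ioi s, (Real.exp (-(g t)) * phiF g t - phiF g s * Real.exp (-(g t)))|
          ≤ ∫ t in Ioi s, |Real.exp (-(g t)) * phiF g t - phiF g s * Real.exp (-(g t))| := by
            simpa [Real.norm_eq_abs] using
              norm_integral_le_integral_norm (μ := volume.restrict (Ioi s))
                (fun t => Real.exp (-(g t)) * phiF g t - phiF g s * Real.exp (-(g t)))
        _ ≤ ∫ t in Ioi s, (C + 3/(2*q)) / (g s) ^ 2 * (Real.exp (-(g t)) * (g t - g s)) := by
            apply setIntegral_mono_on
              (((hintR s hs).sub ((hintIoi s hs).const_mul _)).abs)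
              ((hintJ s hs).const_mul _) measurableSet_Ioi
            intro t ht
            have hts : s₁ ≤ t := hs.trans ht.le
            have heq : Real.exp (-(g t)) * phiF g t - phiF g s * Real.exp (-(g t))
                = Real.exp (-(g t)) * (phiF g t - phiF g s) := by ring
            simp only [Pi.sub_apply]
            rw [heq, abs_mul, Real.abs_exp]
            calc Real.exp (-(g t)) * |phiF g t - phiF g s|
                ≤ Real.exp (-(g t)) * ((C + 3/(2*q)) / (g s) ^ 2 * (g t - g s)) :=
                  mul_le_mul_of_nonneg_left (hφlip s hs t ht.le) (Real.exp_nonneg _)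
              _ = (C + 3/(2*q)) / (g s) ^ 2 * (Real.exp (-(g t)) * (g t - g s)) := by ring
    have h2 : (∫ t in Ioi s, (C + 3/(2*q)) / (g s) ^ 2 * (Real.exp (-(g t)) * (g t - g s)))
        = (C + 3/(2*q)) / (g s) ^ 2 * ∫ t in Ioi s, Real.exp (-(g t)) * (g t - g s) :=
      integral_const_mul _ _
    rw [h2] at h1
    calc |∫ t in Ioi s, (Real.exp (-(g t)) * phiF g t - phiF g s * Real.exp (-(g t)))|
        ≤ (C + 3/(2*q)) / (g s) ^ 2 * ∫ t in Ioi s, Real.exp (-(g t)) * (g t - g s) := h1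
      _ ≤ (C + 3/(2*q)) / (g s) ^ 2 * (Real.exp (-(g s)) / deriv g s) :=
          mul_le_mul_of_nonneg_left (hJbound s hs) (by positivity)
  -- assemble
  refine ⟨⟨fun s => (1 - Real.exp (g s) * deriv g s * ∫ t in Ici s, Real.exp (-(g t))) * g s /
      (g s * deriv (deriv g) s / (deriv g s) ^ 2) - 1, ?_, ?_⟩, hP1⟩
  · -- e → 0
    apply squeeze_zero_norm'
      (a := fun s => |Real.exp (g s) * deriv g s * (∫ t in Ici s, Real.exp (-(g t))) - 1|
        + (C + 3/(2*q)) * (2*q) / g s)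
    · filter_upwards [eventually_ge_atTop s₁] with s hs
      have hgs := hgpos s (hmem s hs)
      have hg's := hg' s (hmem s hs)
      have hHpos : 0 < g s * deriv (deriv g) s / (deriv g s) ^ 2 :=
        lt_trans (by positivity) (hHlow s hs)
      have hstep : 1 - Real.exp (g s) * deriv g s * (∫ t in Ici s, Real.exp (-(g t)))
          = Real.exp (g s) * deriv g s * ∫ t in Ioi s, Real.exp (-(g t)) * phiF g t := by
        have hne : deriv g s ≠ 0 := ne_of_gt hg's
        rw [hIBP1 s hs, mul_sub]
        have h1 : Real.exp (g s) * deriv g s * (Real.exp (-(g s)) / deriv g s) = 1 := by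
          rw [Real.exp_neg]; field_simp
        rw [h1]
        ring
      have hφH : phiF g s * (g s / (g s * deriv (deriv g) s / (deriv g s) ^ 2)) = 1 := by
        simp only [phiF]
        have h2 := ne_of_gt hg's
        have h3 := ne_of_gt (hg''pos s hs)
        field_simp
      have heeq : (1 - Real.exp (g s) * deriv g s * ∫ t in Ici s, Real.exp (-(g t))) * g s /
            (g s * deriv (deriv g) s / (deriv g s) ^ 2) - 1
          = (Real.exp (g s) * deriv g s * (∫ t in Ici s, Real.exp (-(g t))) - 1)
            + (Real.exp (g s) * deriv g s *
                ((∫ t in Ioi s, Real.exp (-(g t)) * phiF g t) -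
                  phiF g s * ∫ t in Ici s, Real.exp (-(g t))))
              * (g s / (g s * deriv (deriv g) s / (deriv g s) ^ 2)) := by
        rw [div_eq_mul_inv ((1 - Real.exp (g s) * deriv g s * ∫ t in Ici s, Real.exp (-(g t))) * g s)]
        rw [mul_assoc (1 - Real.exp (g s) * deriv g s * ∫ t in Ici s, Real.exp (-(g t)))]
        rw [← div_eq_mul_inv (g s)]
        rw [hstep]
        have hexpand : Real.exp (g s) * deriv g s *
              ((∫ t in Ioi s, Real.exp (-(g t)) * phiF g t) -
                phiF g s * ∫ t in Ici s, Real.exp (-(g t)))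
              * (g s / (g s * deriv (deriv g) s / (deriv g s) ^ 2))
            = Real.exp (g s) * deriv g s * (∫ t in Ioi s, Real.exp (-(g t)) * phiF g t)
              * (g s / (g s * deriv (deriv g) s / (deriv g s) ^ 2))
              - Real.exp (g s) * deriv g s * (∫ t in Ici s, Real.exp (-(g t)))
                * (phiF g s * (g s / (g s * deriv (deriv g) s / (deriv g s) ^ 2))) := by
          ring
        rw [hexpand, hφH]
        ring
      rw [Real.norm_eq_abs, heeq]
      have habs := abs_add_le
        (Real.exp (g s) * deriv g s * (∫ t in Ici s, Real.exp (-(g t))) - 1)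
        ((Real.exp (g s) * deriv g s *
            ((∫ t in Ioi s, Real.exp (-(g t)) * phiF g t) -
              phiF g s * ∫ t in Ici s, Real.exp (-(g t))))
          * (g s / (g s * deriv (deriv g) s / (deriv g s) ^ 2)))
      have hT : |(Real.exp (g s) * deriv g s *
            ((∫ t in Ioi s, Real.exp (-(g t)) * phiF g t) -
              phiF g s * ∫ t in Ici s, Real.exp (-(g t))))
          * (g s / (g s * deriv (deriv g) s / (deriv g s) ^ 2))|
          ≤ (C + 3/(2*q)) * (2*q) / g s := by
        rw [abs_mul, abs_mul, abs_of_pos (mul_pos (Real.exp_pos _) hg's),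
          abs_of_pos (div_pos hgs hHpos)]
        have h8 := herr s hs
        have h9 : g s / (g s * deriv (deriv g) s / (deriv g s) ^ 2) ≤ g s * (2*q) := by
          rw [div_le_iff₀ hHpos]
          have h10 : 1 < (g s * deriv (deriv g) s / (deriv g s) ^ 2) * (2*q) :=
            (div_lt_iff₀ (by positivity : (0:ℝ) < 2*q)).mp (hHlow s hs)
          nlinarith [mul_le_mul_of_nonneg_left h10.le hgs.le]
        calc Real.exp (g s) * deriv g s *
              |(∫ t in Ioi s, Real.exp (-(g t)) * phiF g t) -
                phiF g s * ∫ t in Ici s, Real.exp (-(g t))|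
              * (g s / (g s * deriv (deriv g) s / (deriv g s) ^ 2))
            ≤ Real.exp (g s) * deriv g s *
              ((C + 3/(2*q)) / (g s) ^ 2 * (Real.exp (-(g s)) / deriv g s)) * (g s * (2*q)) := by
              apply mul_le_mul
                (mul_le_mul_of_nonneg_left h8 (by positivity)) h9
                (div_nonneg hgs.le hHpos.le) (by positivity)
          _ = (C + 3/(2*q)) * (2*q) / g s := by
              rw [Real.exp_neg]
              field_simp
      linarith
    · have t1 : Tendsto (fun s =>
          |Real.exp (g s) * deriv g s * (∫ t in Ici s, Real.exp (-(g t))) - 1|) atTop (𝓝 0) := by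
        have := (hP1.sub_const 1).abs
        simpa using this
      have t2 : Tendsto (fun s => (C + 3/(2*q)) * (2*q) / g s) atTop (𝓝 0) :=
        Tendsto.div_atTop tendsto_const_nhds hgtop
      have := t1.add t2
      simpa using this
  · -- eventual identity
    filter_upwards [eventually_ge_atTop s₁] with s hs
    have hgs := ne_of_gt (hgpos s (hmem s hs))
    have hg's := ne_of_gt (hg' s (hmem s hs))
    have hg''s := ne_of_gt (hg''pos s hs)
    have hexp := Real.exp_ne_zero (g s)
    field_simp
    ring
end

section
/- Let ℱ(s) := g(s) + 2 log g(s) - log(g(s)/g'(s)) - log(4H(s)) - C/g(s)^{1-ε}, where g satisfies (G1) and (G2), 0 < ε < 1, and C > 0 is sufficiently large. Then ℱ is non-decreasing and convex for all sufficiently large s, and ℱ'(s)/g'(s) → 1 and ℱ''(s)/g''(s) → 1 as s → ∞. -/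
open Real Filter Set MeasureTheory

private lemma abs4 (x1 x2 x3 x4 : ℝ) :
    |x1 + x2 - x3 - x4| ≤ |x1| + |x2| + |x3| + |x4| := by
  have a1 := le_abs_self x1; have b1 := neg_abs_le x1
  have a2 := le_abs_self x2; have b2 := neg_abs_le x2
  have a3 := le_abs_self x3; have b3 := neg_abs_le x3
  have a4 := le_abs_self x4; have b4 := neg_abs_le x4
  rw [abs_le]; constructor <;> nlinarith

set_option maxHeartbeats 1000000 in
private lemma bound1_alg (G G1 Hs Hs1 T q C₀ C ε : ℝ)
    (hq0 : 0 < q) (hC₀ : 0 ≤ C₀) (hC : 0 < C) (hε1 : ε < 1)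
    (hG : 1 < G) (hG1 : 0 < G1) (hT : 0 < T)
    (hHlo : 1/(2*q) < Hs) (hHhi : Hs < 2)
    (h1b : |Hs1| ≤ C₀ * (G1/G)) :
    |Hs/G + 1/G - Hs1/(Hs*G1) - C*((ε-1)*T)|
      ≤ (3 + 2*q*C₀) * (1/G) + (C*(1-ε)) * T := by
  have hG0 : 0 < G := lt_trans one_pos hG
  have hH0 : 0 < Hs := lt_trans (by positivity) hHlo
  have h2qH : 1 ≤ 2*q*Hs := by
    rw [div_lt_iff₀ (by positivity)] at hHlo
    nlinarith
  have h1G : |Hs1| * G ≤ C₀ * G1 := by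
    have h := mul_le_mul_of_nonneg_right h1b hG0.le
    calc |Hs1| * G ≤ C₀*(G1/G)*G := h
      _ = C₀ * G1 := by field_simp
  have t1 : |Hs/G| ≤ 2 * (1/G) := by
    rw [abs_div, abs_of_pos hH0, abs_of_pos hG0, mul_one_div]
    gcongr
  have t2 : |1/G| = 1 * (1/G) := by
    rw [abs_of_pos (by positivity), one_mul]
  have t3 : |Hs1/(Hs*G1)| ≤ 2*q*C₀ * (1/G) := by
    rw [abs_div, abs_of_pos (mul_pos hH0 hG1), div_le_iff₀ (mul_pos hH0 hG1),
      show 2*q*C₀*(1/G)*(Hs*G1) = 2*q*C₀*Hs*G1/G by ring, le_div_iff₀ hG0]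
    nlinarith [mul_nonneg (sub_nonneg.2 h2qH) (mul_nonneg hC₀ hG1.le)]
  have t4 : |C*((ε-1)*T)| = (C*(1-ε)) * T := by
    have h1ε : (0:ℝ) < 1 - ε := by linarith
    rw [show C*((ε-1)*T) = -(C*(1-ε)*T) by ring, abs_neg, abs_of_pos (by positivity)]
  have h4 := abs4 (Hs/G) (1/G) (Hs1/(Hs*G1)) (C*((ε-1)*T))
  have habs3 : (0:ℝ) ≤ |Hs1/(Hs*G1)| := abs_nonneg _
  linarith

set_option maxHeartbeats 1000000 in
private lemma bound2_alg (G G1 Hs Hs1 Hs2 T q C₀ C ε : ℝ)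
    (hq0 : 0 < q) (hC₀ : 0 ≤ C₀) (hC : 0 < C) (hε1 : ε < 1)
    (hG : 1 < G) (hG1 : 0 < G1) (hT : 0 < T)
    (hHlo : 1/(2*q) < Hs) (hHhi : Hs < 2)
    (h1b : |Hs1| ≤ C₀ * (G1/G)) (h2b : |Hs2| ≤ C₀ * (G1/G)^2) :
    |Hs1/(Hs*G1) + (Hs^2-1)/(Hs*G) - (Hs2*Hs - Hs1*Hs1)*G/(Hs^3*G1^2)
      - C*((ε-1)*((ε-2)*T/Hs + T))|
    ≤ (2*q*C₀ + 10*q + 8*q^3*(2*C₀+C₀^2))*(1/G)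
      + (C*(1-ε)*((2-ε)*(2*q)+1))*T := by
  have hG0 : 0 < G := lt_trans one_pos hG
  have hH0 : 0 < Hs := lt_trans (by positivity) hHlo
  have h2qH : 1 ≤ 2*q*Hs := by
    rw [div_lt_iff₀ (by positivity)] at hHlo
    nlinarith
  have h1G : |Hs1| * G ≤ C₀ * G1 := by
    have h := mul_le_mul_of_nonneg_right h1b hG0.le
    calc |Hs1| * G ≤ C₀*(G1/G)*G := h
      _ = C₀ * G1 := by field_simp
  have h2G : |Hs2| * G^2 ≤ C₀ * G1^2 := by
    have h := mul_le_mul_of_nonneg_right h2b (by positivity : (0:ℝ) ≤ G^2)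
    calc |Hs2| * G^2 ≤ C₀*(G1/G)^2*G^2 := h
      _ = C₀ * G1^2 := by field_simp
  have t1 : |Hs1/(Hs*G1)| ≤ 2*q*C₀ * (1/G) := by
    rw [abs_div, abs_of_pos (mul_pos hH0 hG1), div_le_iff₀ (mul_pos hH0 hG1),
      show 2*q*C₀*(1/G)*(Hs*G1) = 2*q*C₀*Hs*G1/G by ring, le_div_iff₀ hG0]
    nlinarith [mul_nonneg (sub_nonneg.2 h2qH) (mul_nonneg hC₀ hG1.le)]
  have t2 : |(Hs^2-1)/(Hs*G)| ≤ 10*q * (1/G) := by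
    rw [abs_div, abs_of_pos (mul_pos hH0 hG0), div_le_iff₀ (mul_pos hH0 hG0),
      show 10*q*(1/G)*(Hs*G) = 10*q*Hs*(G/G) by ring, div_self hG0.ne', mul_one]
    have habs : |Hs^2 - 1| ≤ 5 := abs_le.2 ⟨by nlinarith, by nlinarith⟩
    nlinarith
  have hcube : 1 ≤ 8*q^3*Hs^3 := by
    nlinarith [mul_nonneg (sub_nonneg.2 h2qH) (sq_nonneg (2*q*Hs)),
      mul_nonneg (sub_nonneg.2 h2qH) (mul_pos (mul_pos two_pos hq0) hH0).le]
  have t3 : |(Hs2*Hs - Hs1*Hs1)*G/(Hs^3*G1^2)| ≤ 8*q^3*(2*C₀+C₀^2) * (1/G) := by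
    have hd : (0:ℝ) < Hs^3*G1^2 := by positivity
    rw [abs_div, abs_of_pos hd, div_le_iff₀ hd, abs_mul, abs_of_pos hG0,
      show 8*q^3*(2*C₀+C₀^2)*(1/G)*(Hs^3*G1^2) = 8*q^3*(2*C₀+C₀^2)*Hs^3*G1^2/G by ring,
      le_div_iff₀ hG0]
    have hsub : |Hs2*Hs - Hs1*Hs1| ≤ |Hs2| * Hs + |Hs1| * |Hs1| := by
      calc |Hs2*Hs - Hs1*Hs1| ≤ |Hs2*Hs| + |Hs1*Hs1| := abs_sub _ _
        _ = |Hs2| * Hs + |Hs1| * |Hs1| := by rw [abs_mul, abs_mul, abs_of_pos hH0]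
    have p1 : |Hs2*Hs - Hs1*Hs1| * G * G ≤ (|Hs2| * Hs + |Hs1| * |Hs1|) * G * G := by
      have := mul_le_mul_of_nonneg_right hsub (by positivity : (0:ℝ) ≤ G*G)
      nlinarith [this]
    have p2 : |Hs2| * G^2 * Hs ≤ C₀*G1^2*Hs := mul_le_mul_of_nonneg_right h2G hH0.le
    have p3 : (|Hs1| * G) * (|Hs1| * G) ≤ (C₀*G1)*(C₀*G1) :=
      mul_le_mul h1G h1G (by positivity) (mul_nonneg hC₀ hG1.le)
    have step1 : C₀*G1^2*Hs + C₀^2*G1^2 ≤ (2*C₀+C₀^2)*G1^2 := by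
      nlinarith [mul_nonneg hC₀ (sq_nonneg G1)]
    have hM : (0:ℝ) ≤ (2*C₀+C₀^2)*G1^2 :=
      mul_nonneg (by nlinarith [sq_nonneg C₀] : (0:ℝ) ≤ 2*C₀+C₀^2) (sq_nonneg G1)
    have step2 : (2*C₀+C₀^2)*G1^2 ≤ 8*q^3*(2*C₀+C₀^2)*Hs^3*G1^2 := by
      calc (2*C₀+C₀^2)*G1^2 ≤ 8*q^3*Hs^3*((2*C₀+C₀^2)*G1^2) :=
            le_mul_of_one_le_left hM hcube
        _ = 8*q^3*(2*C₀+C₀^2)*Hs^3*G1^2 := by ring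
    nlinarith [p1, p2, p3, step1, step2]
  have t4 : |C*((ε-1)*((ε-2)*T/Hs + T))| ≤ (C*(1-ε)*((2-ε)*(2*q)+1))*T := by
    rw [abs_mul, abs_of_pos hC, abs_mul, abs_of_neg (show ε-1 < 0 by linarith), neg_sub]
    have hin : |(ε-2)*T/Hs + T| ≤ (2-ε)*(2*q)*T + T := by
      have step : |(ε-2)*T/Hs + T| ≤ |(ε-2)*T/Hs| + T := by
        have h := abs_add_le ((ε-2)*T/Hs) T
        rwa [abs_of_pos hT] at h
      have heq : |(ε-2)*T/Hs| = (2-ε)*T/Hs := by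
        rw [abs_div, abs_of_pos hH0, abs_mul, abs_of_neg (show ε-2 < 0 by linarith),
          abs_of_pos hT, neg_sub]
      have hstep2 : (2-ε)*T/Hs ≤ (2-ε)*(2*q)*T := by
        rw [div_le_iff₀ hH0]
        nlinarith [mul_nonneg (mul_nonneg (show (0:ℝ) ≤ 2-ε by linarith) hT.le)
          (sub_nonneg.2 h2qH)]
      linarith [step, heq ▸ step]
    calc C*((1-ε)*|(ε-2)*T/Hs + T|) ≤ C*((1-ε)*((2-ε)*(2*q)*T + T)) := by
          apply mul_le_mul_of_nonneg_left _ hC.le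
          exact mul_le_mul_of_nonneg_left hin (by linarith)
      _ = (C*(1-ε)*((2-ε)*(2*q)+1))*T := by ring
  have h4 := abs4 (Hs1/(Hs*G1)) ((Hs^2-1)/(Hs*G)) ((Hs2*Hs - Hs1*Hs1)*G/(Hs^3*G1^2))
    (C*((ε-1)*((ε-2)*T/Hs + T)))
  linarith

set_option maxHeartbeats 1600000 in
private lemma id1_alg (G G1 Hs Hs1 T C ε : ℝ) (h0 : G ≠ 0) (h1 : G1 ≠ 0) (hH : Hs ≠ 0) :
    (G1 + G1 / G + Hs * G1 ^ 2 / G / G1 - Hs1 / Hs - C * ((ε - 1) * T * G1)) / G1 - 1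
    = Hs / G + 1 / G - Hs1 / (Hs * G1) - C * ((ε - 1) * T) := by
  field_simp
  ring

set_option maxHeartbeats 1600000 in
private lemma id2_alg (G G1 Hs Hs1 Hs2 T C ε : ℝ) (h0 : G ≠ 0) (h1 : G1 ≠ 0) (hH : Hs ≠ 0) :
    (Hs * G1 ^ 2 / G
      + (Hs1 * (G1 / G) + (Hs + 1) * ((Hs * G1 ^ 2 / G * G - G1 * G1) / G ^ 2))
      - (Hs2 * Hs - Hs1 * Hs1) / Hs ^ 2
      - C * (ε - 1) * ((ε - 2) * T / G * G1 * G1 + T * (Hs * G1 ^ 2 / G)))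
      / (Hs * G1 ^ 2 / G) - 1
    = Hs1 / (Hs * G1) + (Hs ^ 2 - 1) / (Hs * G)
      - (Hs2 * Hs - Hs1 * Hs1) * G / (Hs ^ 3 * G1 ^ 2)
      - C * ((ε - 1) * ((ε - 2) * T / Hs + T)) := by
  field_simp
  ring

/-- For g satisfying (G1)-(G2), 0 < ε < 1 and C sufficiently
large, the function ℱ(s) = g + 2 log g - log(g/g') - log(4H) - C/g^{1-ε}
is non-decreasing and convex for large s, and ℱ'/g' → 1, ℱ''/g'' → 1. -/
theorem stmt_18 (g : ℝ → ℝ) (s₀ q ε C₀ : ℝ) (hq : 1 ≤ q)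
    (hε0 : 0 < ε) (hε1 : ε < 1)
    (hC5 : ContDiffOn ℝ 5 g (Ioi s₀))
    (hgpos : ∀ s ∈ Ioi s₀, 0 < g s)
    (hg' : ∀ s ∈ Ioi s₀, 0 < deriv g s)
    (hg'' : ∀ s ∈ Ioi s₀, 0 < deriv (deriv g) s)
    (hginf : Tendsto g atTop atTop)
    (hlim : Tendsto (fun s => g s * deriv (deriv g) s / (deriv g s) ^ 2)
      atTop (nhds (1 / q)))
    (hG2 : ∀ k ∈ ({1, 2} : Finset ℕ), ∀ s ∈ Ioi s₀,
      |iteratedDeriv k (fun u => g u * deriv (deriv g) u / (deriv g u) ^ 2) s|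
        ≤ C₀ * (deriv g s / g s) ^ k) :
    ∃ C₁ > (0 : ℝ), ∀ C ≥ C₁,
      ∃ s₁ : ℝ,
        MonotoneOn (fun s => g s + 2 * Real.log (g s)
            - Real.log (g s / deriv g s)
            - Real.log (4 * (g s * deriv (deriv g) s / (deriv g s) ^ 2))
            - C / g s ^ (1 - ε)) (Ici s₁) ∧
        ConvexOn ℝ (Ici s₁) (fun s => g s + 2 * Real.log (g s)
            - Real.log (g s / deriv g s)
            - Real.log (4 * (g s * deriv (deriv g) s / (deriv g s) ^ 2))
            - C / g s ^ (1 - ε)) ∧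
        Tendsto (fun s =>
            deriv (fun u => g u + 2 * Real.log (g u)
              - Real.log (g u / deriv g u)
              - Real.log (4 * (g u * deriv (deriv g) u / (deriv g u) ^ 2))
              - C / g u ^ (1 - ε)) s / deriv g s) atTop (nhds 1) ∧
        Tendsto (fun s =>
            deriv (deriv (fun u => g u + 2 * Real.log (g u)
              - Real.log (g u / deriv g u)
              - Real.log (4 * (g u * deriv (deriv g) u / (deriv g u) ^ 2))
              - C / g u ^ (1 - ε))) s / deriv (deriv g) s) atTop (nhds 1) := by
  have hq0 : (0:ℝ) < q := lt_of_lt_of_le one_pos hq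
  refine ⟨1, one_pos, fun C hC => ?_⟩
  have hCpos : (0:ℝ) < C := lt_of_lt_of_le one_pos hC
  set g1 : ℝ → ℝ := deriv g with hg1def
  set g2 : ℝ → ℝ := deriv g1 with hg2def
  set H : ℝ → ℝ := fun s => g s * g2 s / g1 s ^ 2 with hHdef
  set H1 : ℝ → ℝ := deriv H with hH1def
  set H2 : ℝ → ℝ := deriv H1 with hH2def
  have hopen : IsOpen (Ioi s₀) := isOpen_Ioi
  -- smoothness facts
  have hg1C : ContDiffOn ℝ 4 g1 (Ioi s₀) := hC5.deriv_of_isOpen hopen (by norm_num)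
  have hg2C : ContDiffOn ℝ 3 g2 (Ioi s₀) := hg1C.deriv_of_isOpen hopen (by norm_num)
  have hDg : ∀ s ∈ Ioi s₀, HasDerivAt g (g1 s) s := fun s hs =>
    ((hC5.differentiableOn (by norm_num)).differentiableAt (hopen.mem_nhds hs)).hasDerivAt
  have hDg1 : ∀ s ∈ Ioi s₀, HasDerivAt g1 (g2 s) s := fun s hs =>
    ((hg1C.differentiableOn (by norm_num)).differentiableAt (hopen.mem_nhds hs)).hasDerivAt
  have hHC : ContDiffOn ℝ 2 H (Ioi s₀) := by
    apply ContDiffOn.div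
    · exact (hC5.of_le (by norm_num)).mul (hg2C.of_le (by norm_num))
    · exact (hg1C.of_le (by norm_num)).pow 2
    · exact fun s hs => pow_ne_zero 2 (hg' s hs).ne'
  have hDH : ∀ s ∈ Ioi s₀, HasDerivAt H (H1 s) s := fun s hs =>
    ((hHC.differentiableOn (by norm_num)).differentiableAt (hopen.mem_nhds hs)).hasDerivAt
  have hH1C : ContDiffOn ℝ 1 H1 (Ioi s₀) := hHC.deriv_of_isOpen hopen (by norm_num)
  have hDH1 : ∀ s ∈ Ioi s₀, HasDerivAt H1 (H2 s) s := fun s hs =>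
    ((hH1C.differentiableOn (by norm_num)).differentiableAt (hopen.mem_nhds hs)).hasDerivAt
  -- bounds on H1, H2
  have hH1b : ∀ s ∈ Ioi s₀, |H1 s| ≤ C₀ * (g1 s / g s) := by
    intro s hs
    have h := hG2 1 (by simp) s hs
    rwa [iteratedDeriv_one, pow_one] at h
  have hH2b : ∀ s ∈ Ioi s₀, |H2 s| ≤ C₀ * (g1 s / g s) ^ 2 := by
    intro s hs
    have h := hG2 2 (by simp) s hs
    rwa [iteratedDeriv_succ, iteratedDeriv_one] at h
  have hC₀ : 0 ≤ C₀ := by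
    have hs : s₀ + 1 ∈ Ioi s₀ := by simp
    have h1 := hH1b _ hs
    have h2 : 0 < g1 (s₀+1) / g (s₀+1) := div_pos (hg' _ hs) (hgpos _ hs)
    nlinarith [abs_nonneg (H1 (s₀+1))]
  -- positivity of H
  have hHpos : ∀ s ∈ Ioi s₀, 0 < H s := fun s hs =>
    div_pos (mul_pos (hgpos s hs) (hg'' s hs)) (pow_pos (hg' s hs) 2)
  -- the identity g2 = H g1^2 / g
  have hg2v : ∀ s ∈ Ioi s₀, g2 s = H s * g1 s ^ 2 / g s := by
    intro s hs
    have h0 := (hgpos s hs).ne'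
    have h1 := (hg' s hs).ne'
    rw [hHdef]
    field_simp
  -- choose a with eventual bounds
  have hev : ∀ᶠ s in atTop, s₀ < s ∧ 1 < g s ∧ 1/(2*q) < H s ∧ H s < 2 := by
    have h1 : ∀ᶠ s in atTop, s₀ < s := eventually_gt_atTop s₀
    have h2 : ∀ᶠ s in atTop, 1 < g s := hginf.eventually_gt_atTop 1
    have h3 : ∀ᶠ s in atTop, 1/(2*q) < H s := by
      apply hlim.eventually (eventually_gt_nhds ?_)
      rw [div_lt_div_iff₀ (by positivity) hq0]
      nlinarith
    have h4 : ∀ᶠ s in atTop, H s < 2 := by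
      apply hlim.eventually (eventually_lt_nhds ?_)
      rw [div_lt_iff₀ hq0]; nlinarith
    filter_upwards [h1, h2, h3, h4] with s a b c d using ⟨a, b, c, d⟩
  obtain ⟨a, ha⟩ := eventually_atTop.1 hev
  -- the functions
  set Φ : ℝ → ℝ := fun s => g s + 2 * Real.log (g s)
      - Real.log (g s / g1 s)
      - Real.log (4 * (g s * g2 s / g1 s ^ 2))
      - C / g s ^ (1 - ε) with hΦdef
  set ψ : ℝ → ℝ := fun u => g u + Real.log (g u) + Real.log (g1 u)
      - Real.log (H u) - Real.log 4 - C * g u ^ (ε - 1) with hψdef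
  set F1 : ℝ → ℝ := fun s => g1 s + g1 s / g s + g2 s / g1 s - H1 s / H s
      - C * ((ε - 1) * g s ^ (ε - 2) * g1 s) with hF1def
  set F1' : ℝ → ℝ := fun s => g1 s + (H s + 1) * (g1 s / g s) - H1 s / H s
      - C * (ε - 1) * (g s ^ (ε - 2) * g1 s) with hF1'def
  set F2 : ℝ → ℝ := fun s => g2 s
      + (H1 s * (g1 s / g s) + (H s + 1) * ((g2 s * g s - g1 s * g1 s) / g s ^ 2))
      - (H2 s * H s - H1 s * H1 s) / H s ^ 2
      - C * (ε - 1) * ((ε - 2) * g s ^ (ε - 2) / g s * g1 s * g1 s + g s ^ (ε - 2) * g2 s)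
      with hF2def
  -- Φ = ψ on Ioi s₀
  have hΦψ : ∀ s ∈ Ioi s₀, Φ s = ψ s := by
    intro s hs
    have h0 := hgpos s hs
    have h1 := hg' s hs
    have hH0 := hHpos s hs
    rw [hΦdef, hψdef]
    simp only
    rw [log_div h0.ne' h1.ne', log_mul (by norm_num) hH0.ne',
      div_eq_mul_inv C, ← Real.rpow_neg h0.le, show -(1-ε) = ε - 1 by ring]
    ring
  -- derivative of ψ
  have hDψ : ∀ s ∈ Ioi s₀, HasDerivAt ψ (F1 s) s := by
    intro s hs
    have h0 := hgpos s hs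
    have h1 := hg' s hs
    have hH0 := hHpos s hs
    have A := hDg s hs
    have B := hDg1 s hs
    have HH := hDH s hs
    have hrp : HasDerivAt (fun u => C * g u ^ (ε - 1))
        (C * (g1 s * (ε-1) * g s ^ (ε-1-1))) s :=
      (A.rpow_const (Or.inl h0.ne')).const_mul C
    have h := ((((A.add (A.log h0.ne')).add (B.log h1.ne')).sub
      (HH.log hH0.ne')).sub (hasDerivAt_const s (Real.log 4))).sub hrp
    rw [hψdef]
    refine h.congr_deriv ?_
    rw [hF1def]
    simp only
    rw [show ε - 1 - 1 = ε - 2 by ring]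
    ring
  have hDΦ : ∀ s ∈ Ioi s₀, HasDerivAt Φ (F1 s) s := fun s hs =>
    (hDψ s hs).congr_of_eventuallyEq
      (eventuallyEq_of_mem (hopen.mem_nhds hs) hΦψ)
  -- F1 = F1' on Ioi s₀
  have hF1eq : ∀ s ∈ Ioi s₀, F1 s = F1' s := by
    intro s hs
    have h0 := (hgpos s hs).ne'
    have h1 := (hg' s hs).ne'
    have hH0 := (hHpos s hs).ne'
    rw [hF1def, hF1'def]
    simp only
    rw [hg2v s hs]
    field_simp
    ring
  -- derivative of F1'
  have hDF1' : ∀ s ∈ Ioi s₀, HasDerivAt F1' (F2 s) s := by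
    intro s hs
    have h0 := hgpos s hs
    have h1 := hg' s hs
    have hH0 := hHpos s hs
    have A := hDg s hs
    have B := hDg1 s hs
    have HH := hDH s hs
    have P2 : HasDerivAt (fun u => (H u + 1) * (g1 u / g u))
        (H1 s * (g1 s / g s) + (H s + 1) * ((g2 s * g s - g1 s * g1 s) / g s ^ 2)) s :=
      (HH.add_const 1).mul (B.div A h0.ne')
    have P3 : HasDerivAt (fun u => H1 u / H u)
        ((H2 s * H s - H1 s * H1 s) / H s ^ 2) s := (hDH1 s hs).div HH hH0.ne'
    have P4 : HasDerivAt (fun u => C * (ε - 1) * (g u ^ (ε - 2) * g1 u))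
        (C * (ε - 1) * ((g1 s * (ε - 2) * g s ^ (ε-2-1)) * g1 s + g s ^ (ε-2) * g2 s)) s :=
      ((A.rpow_const (Or.inl h0.ne')).mul B).const_mul (C * (ε - 1))
    have h := ((B.add P2).sub P3).sub P4
    rw [hF1'def]
    refine h.congr_deriv ?_
    rw [hF2def]
    simp only
    have hpow : g s ^ (ε - 2 - 1) = g s ^ (ε - 2) / g s := by
      rw [eq_div_iff h0.ne', ← Real.rpow_add_one h0.ne']
      norm_num
    rw [hpow]
    ring
  have hD2Φ : ∀ s ∈ Ioi s₀, HasDerivAt (deriv Φ) (F2 s) s := by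
    intro s hs
    have h' : HasDerivAt F1 (F2 s) s :=
      (hDF1' s hs).congr_of_eventuallyEq
        (eventuallyEq_of_mem (hopen.mem_nhds hs) hF1eq)
    exact h'.congr_of_eventuallyEq
      (eventuallyEq_of_mem (hopen.mem_nhds hs) fun x hx => (hDΦ x hx).deriv)
  -- identities for the ratios
  have hid1 : ∀ s ∈ Ioi s₀, F1 s / g1 s - 1
      = H s / g s + 1 / g s - H1 s / (H s * g1 s) - C * ((ε - 1) * g s ^ (ε - 2)) := by
    intro s hs
    have h0 := (hgpos s hs).ne'
    have h1 := (hg' s hs).ne'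
    have hH0 := (hHpos s hs).ne'
    rw [hF1def]
    simp only
    rw [hg2v s hs]
    exact id1_alg (g s) (g1 s) (H s) (H1 s) (g s ^ (ε-2)) C ε h0 h1 hH0
  have hid2 : ∀ s ∈ Ioi s₀, F2 s / g2 s - 1
      = H1 s / (H s * g1 s) + (H s ^ 2 - 1) / (H s * g s)
        - (H2 s * H s - H1 s * H1 s) * g s / (H s ^ 3 * g1 s ^ 2)
        - C * ((ε - 1) * ((ε - 2) * g s ^ (ε - 2) / H s + g s ^ (ε - 2))) := by
    intro s hs
    have h0 := (hgpos s hs).ne'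
    have h1 := (hg' s hs).ne'
    have hH0 := (hHpos s hs).ne'
    rw [hF2def]
    simp only
    rw [hg2v s hs]
    exact id2_alg (g s) (g1 s) (H s) (H1 s) (H2 s) (g s ^ (ε-2)) C ε h0 h1 hH0
  have hbd1 : ∀ s, a ≤ s → |F1 s / g1 s - 1|
      ≤ (3 + 2*q*C₀) * (1/g s) + (C*(1-ε)) * g s ^ (ε-2) := by
    intro s hs
    obtain ⟨hs0', hgg, hHlo, hHhi⟩ := ha s hs
    have hs0 : s ∈ Ioi s₀ := mem_Ioi.2 hs0'
    rw [hid1 s hs0]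
    exact bound1_alg (g s) (g1 s) (H s) (H1 s) (g s ^ (ε-2)) q C₀ C ε hq0 hC₀ hCpos hε1
      hgg (hg' s hs0) (Real.rpow_pos_of_pos (hgpos s hs0) _) hHlo hHhi (hH1b s hs0)
  have hbd2 : ∀ s, a ≤ s → |F2 s / g2 s - 1|
      ≤ (2*q*C₀ + 10*q + 8*q^3*(2*C₀+C₀^2)) * (1/g s)
        + (C*(1-ε)*((2-ε)*(2*q)+1)) * g s ^ (ε-2) := by
    intro s hs
    obtain ⟨hs0', hgg, hHlo, hHhi⟩ := ha s hs
    have hs0 : s ∈ Ioi s₀ := mem_Ioi.2 hs0'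
    rw [hid2 s hs0]
    exact bound2_alg (g s) (g1 s) (H s) (H1 s) (H2 s) (g s ^ (ε-2)) q C₀ C ε hq0 hC₀ hCpos hε1
      hgg (hg' s hs0) (Real.rpow_pos_of_pos (hgpos s hs0) _) hHlo hHhi
      (hH1b s hs0) (hH2b s hs0)
  have hB : ∀ K K' : ℝ, Tendsto (fun s => K * (1/g s) + K' * g s ^ (ε-2)) atTop (nhds 0) := by
    intro K K'
    have t1 : Tendsto (fun s => 1 / g s) atTop (nhds 0) := by
      simpa [one_div, Function.comp_def] using tendsto_inv_atTop_zero.comp hginf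
    have t2 : Tendsto (fun s => g s ^ (ε-2)) atTop (nhds 0) := by
      have h := (tendsto_rpow_neg_atTop (show (0:ℝ) < 2 - ε by linarith)).comp hginf
      simpa [Function.comp_def, show -(2-ε) = ε - 2 by ring] using h
    simpa using (t1.const_mul K).add (t2.const_mul K')
  have hL1 : Tendsto (fun s => F1 s / g1 s) atTop (nhds 1) := by
    have h0 : Tendsto (fun s => F1 s / g1 s - 1) atTop (nhds 0) := by
      apply squeeze_zero_norm' ?_ (hB (3 + 2*q*C₀) (C*(1-ε)))
      filter_upwards [eventually_ge_atTop a] with s hs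
      simpa [Real.norm_eq_abs] using hbd1 s hs
    simpa using h0.add_const 1
  have hL2 : Tendsto (fun s => F2 s / g2 s) atTop (nhds 1) := by
    have h0 : Tendsto (fun s => F2 s / g2 s - 1) atTop (nhds 0) := by
      apply squeeze_zero_norm' ?_
        (hB (2*q*C₀ + 10*q + 8*q^3*(2*C₀+C₀^2)) (C*(1-ε)*((2-ε)*(2*q)+1)))
      filter_upwards [eventually_ge_atTop a] with s hs
      simpa [Real.norm_eq_abs] using hbd2 s hs
    simpa using h0.add_const 1
  -- choose s₁
  have hev1 : ∀ᶠ s in atTop, 0 < F1 s / g1 s := hL1.eventually (eventually_gt_nhds one_pos)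
  have hev2 : ∀ᶠ s in atTop, 0 < F2 s / g2 s := hL2.eventually (eventually_gt_nhds one_pos)
  obtain ⟨s₁, hs₁⟩ :=
    eventually_atTop.1 ((hev1.and hev2).and (eventually_gt_atTop (max a s₀)))
  have hmem : ∀ x, s₁ ≤ x → x ∈ Ioi s₀ := fun x hx =>
    mem_Ioi.2 (lt_of_le_of_lt (le_max_right a s₀) (hs₁ x hx).2)
  have hF1pos : ∀ x, s₁ ≤ x → 0 ≤ F1 x := by
    intro x hx
    have h1 := (hs₁ x hx).1.1
    have h2 := hg' x (hmem x hx)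
    have h3 := mul_pos h1 h2
    rw [div_mul_cancel₀ _ h2.ne'] at h3
    exact h3.le
  have hF2pos : ∀ x, s₁ ≤ x → 0 ≤ F2 x := by
    intro x hx
    have h1 := (hs₁ x hx).1.2
    have h2 := hg'' x (hmem x hx)
    have h3 := mul_pos h1 h2
    rw [div_mul_cancel₀ _ h2.ne'] at h3
    exact h3.le
  have hdiff : ∀ x ∈ Ici s₁, DifferentiableAt ℝ Φ x := fun x hx =>
    (hDΦ x (hmem x hx)).differentiableAt
  refine ⟨s₁, ?_, ?_, ?_, ?_⟩
  · -- MonotoneOn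
    apply monotoneOn_of_deriv_nonneg (convex_Ici s₁)
    · exact fun x hx => (hdiff x hx).continuousAt.continuousWithinAt
    · intro x hx
      rw [interior_Ici] at hx
      exact (hdiff x (mem_Ici.2 (le_of_lt hx))).differentiableWithinAt
    · intro x hx
      rw [interior_Ici] at hx
      rw [(hDΦ x (hmem x hx.le)).deriv]
      exact hF1pos x hx.le
  · -- ConvexOn
    apply convexOn_of_deriv2_nonneg (convex_Ici s₁)
    · exact fun x hx => (hdiff x hx).continuousAt.continuousWithinAt
    · intro x hx
      rw [interior_Ici] at hx
      exact (hdiff x (mem_Ici.2 (le_of_lt hx))).differentiableWithinAt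
    · intro x hx
      rw [interior_Ici] at hx
      exact (hD2Φ x (hmem x hx.le)).differentiableAt.differentiableWithinAt
    · intro x hx
      rw [interior_Ici] at hx
      have hiter : deriv^[2] Φ = deriv (deriv Φ) := rfl
      rw [hiter, (hD2Φ x (hmem x hx.le)).deriv]
      exact hF2pos x hx.le
  · -- first limit
    refine hL1.congr' ?_
    filter_upwards [eventually_gt_atTop s₀] with s hs
    rw [(hDΦ s (mem_Ioi.2 hs)).deriv]
  · -- second limit
    refine hL2.congr' ?_
    filter_upwards [eventually_gt_atTop s₀] with s hs
    rw [(hD2Φ s (mem_Ioi.2 hs)).deriv]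
end
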